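/- arXiv:1502.06689 — 5 statements merged into one kernel-verified Lean document; each statement's English description precedes it below -/
import Mathlib

section
/- (Restricted strong convexity along the segment.) Let f : ℝ → (0,1) be twice differentiable, let M, M* ∈ ℝ^{m×n} satisfy ‖M‖_∞ ≤ α and ‖M*‖_∞ ≤ α, and let M̃ = M* + γ(M − M*) for some γ ∈ [0,1]. Then for any Y ∈ {±1}^{m×n} and Ω ⊆ [m]×[n], the second derivative of the map t ↦ F_{Ω,Y}(M* + t(M − M*)) at t = γ (equivalently, the Hessian quadratic form of F_{Ω,Y} at M̃ applied to the direction M − M*) satisfies Σ_{(i,j)∈Ω} (∂²F_{Ω,Y}/∂M_ij²)(M̃) · (M_ij − M*_ij)² ≥ γ_α · ‖(M − M*)_Ω‖_F², where (A)_Ω zeroes out entries outside Ω. -/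
open MeasureTheory ProbabilityTheory

noncomputable section

/-- The Frobenius norm of a real matrix. -/
def frob {m n : ℕ} (A : Matrix (Fin m) (Fin n) ℝ) : ℝ :=
  Real.sqrt (∑ i, ∑ j, (A i j) ^ 2)

/-- The spectral (ℓ₂ operator) norm of a real matrix; this is its largest singular value σ₁. -/
def specNorm {m n : ℕ} (A : Matrix (Fin m) (Fin n) ℝ) : ℝ :=
  sSup {c : ℝ | ∃ x : Fin n → ℝ, (∑ j, (x j) ^ 2) ≤ 1 ∧
    c = Real.sqrt (∑ i, (A.mulVec x i) ^ 2)}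

/-- The second largest singular value, via the Eckart–Young characterization
σ₂(A) = inf { ‖A - B‖₂ : rank B ≤ 1 }. -/
def sigma2 {m n : ℕ} (A : Matrix (Fin m) (Fin n) ℝ) : ℝ :=
  sInf {c : ℝ | ∃ B : Matrix (Fin m) (Fin n) ℝ, B.rank ≤ 1 ∧ c = specNorm (A - B)}

/-- The negative log-likelihood F_{Ω,Y}(M). -/
def FLL {m n : ℕ} (ΩS : Finset (Fin m × Fin n)) (Y : Matrix (Fin m) (Fin n) ℝ)
    (f : ℝ → ℝ) (M : Matrix (Fin m) (Fin n) ℝ) : ℝ :=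
  -∑ p ∈ ΩS, ((if Y p.1 p.2 = 1 then Real.log (f (M p.1 p.2)) else 0)
      + (if Y p.1 p.2 = -1 then Real.log (1 - f (M p.1 p.2)) else 0))

/-- The gradient ∇_M F_{Ω,Y}(M) of the negative log-likelihood, given entrywise by
Z_ij = ( -(f'(M_ij)/f(M_ij))·1{Y_ij=1} + (f'(M_ij)/(1-f(M_ij)))·1{Y_ij=-1} )·1{(i,j)∈Ω}. -/
def gradF {m n : ℕ} (ΩS : Finset (Fin m × Fin n)) (Y : Matrix (Fin m) (Fin n) ℝ)
    (f : ℝ → ℝ) (M : Matrix (Fin m) (Fin n) ℝ) : Matrix (Fin m) (Fin n) ℝ :=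
  Matrix.of fun i j =>
    if (i, j) ∈ ΩS then
      ((if Y i j = 1 then -(deriv f (M i j) / f (M i j)) else 0)
        + (if Y i j = -1 then deriv f (M i j) / (1 - f (M i j)) else 0))
    else 0

/-- Assumption (A1): the normalized all-ones vectors 1_m/√m and 1_n/√n form a singular
pair of G for its largest singular value σ₁(G) = specNorm G. -/
def AssumpA1 {m n : ℕ} (G : Matrix (Fin m) (Fin n) ℝ) : Prop :=
  (G.mulVec (fun _ => 1 / Real.sqrt n) = fun _ => specNorm G / Real.sqrt m) ∧
  (G.transpose.mulVec (fun _ => 1 / Real.sqrt m) = fun _ => specNorm G / Real.sqrt n)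

/-- R_Ω(Z): restriction of a matrix to the observed entries (zero outside Ω). -/
def samp {m n : ℕ} (ΩS : Finset (Fin m × Fin n)) (Z : Matrix (Fin m) (Fin n) ℝ) :
    Matrix (Fin m) (Fin n) ℝ :=
  Matrix.of fun i j => if (i, j) ∈ ΩS then Z i j else 0

/-- The constraint set C = {M : ‖M‖_∞ ≤ α, rank M ≤ r}. -/
def constr {m n : ℕ} (α : ℝ) (r : ℕ) : Set (Matrix (Fin m) (Fin n) ℝ) :=
  {M | (∀ i j, |M i j| ≤ α) ∧ M.rank ≤ r}

/-- The max-norm ‖Z‖_max = inf { max(‖U‖_{2,∞}², ‖V‖_{2,∞}²) : Z = U Vᵀ }. -/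
def maxNorm {m n : ℕ} (Z : Matrix (Fin m) (Fin n) ℝ) : ℝ :=
  sInf {c : ℝ | ∃ (k : ℕ) (U : Matrix (Fin m) (Fin k) ℝ) (V : Matrix (Fin n) (Fin k) ℝ),
    Z = U * V.transpose ∧
    c = max (⨆ i, ∑ ℓ, (U i ℓ) ^ 2) (⨆ j, ∑ ℓ, (V j ℓ) ^ 2)}

/-- The entrywise sup norm ‖Z‖_∞. -/
def entrySup {m n : ℕ} (Z : Matrix (Fin m) (Fin n) ℝ) : ℝ :=
  ⨆ p : Fin m × Fin n, |Z p.1 p.2|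

/-- First-derivative value of the per-entry log-likelihood term along the segment. -/
def D1x (f : ℝ → ℝ) (y a d t : ℝ) : ℝ :=
  if y = 1 then deriv f (a + t * d) * d / f (a + t * d)
  else -(deriv f (a + t * d) * d) / (1 - f (a + t * d))

/-- Second-derivative value of the per-entry log-likelihood term along the segment. -/
def D2x (f : ℝ → ℝ) (y a d t : ℝ) : ℝ :=
  if y = 1 then
    (deriv (deriv f) (a + t * d) * d * d * f (a + t * d)
      - deriv f (a + t * d) * d * (deriv f (a + t * d) * d)) / f (a + t * d) ^ 2
  else
    (-(deriv (deriv f) (a + t * d) * d * d) * (1 - f (a + t * d))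
      - -(deriv f (a + t * d) * d) * -(deriv f (a + t * d) * d)) / (1 - f (a + t * d)) ^ 2

lemma aux_inner (a d t : ℝ) : HasDerivAt (fun s : ℝ => a + s * d) d t := by
  simpa using ((hasDerivAt_id t).mul_const d).const_add a

lemma aux_fx (f : ℝ → ℝ) (hf1 : Differentiable ℝ f) (a d t : ℝ) :
    HasDerivAt (fun s => f (a + s * d)) (deriv f (a + t * d) * d) t :=
  (hf1 (a + t * d)).hasDerivAt.comp t (aux_inner a d t)

lemma aux_log_f (f : ℝ → ℝ) (hf1 : Differentiable ℝ f) (hpos : ∀ x, 0 < f x)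
    (a d t : ℝ) :
    HasDerivAt (fun s => Real.log (f (a + s * d)))
      (deriv f (a + t * d) * d / f (a + t * d)) t :=
  (aux_fx f hf1 a d t).log (hpos _).ne'

lemma aux_log_1f (f : ℝ → ℝ) (hf1 : Differentiable ℝ f) (hlt : ∀ x, f x < 1)
    (a d t : ℝ) :
    HasDerivAt (fun s => Real.log (1 - f (a + s * d)))
      (-(deriv f (a + t * d) * d) / (1 - f (a + t * d))) t :=
  ((aux_fx f hf1 a d t).const_sub 1).log (sub_ne_zero.mpr (hlt _).ne')

lemma aux_log_f' (f : ℝ → ℝ) (hf1 : Differentiable ℝ f) (hf2 : Differentiable ℝ (deriv f))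
    (hpos : ∀ x, 0 < f x) (a d t : ℝ) :
    HasDerivAt (fun s => deriv f (a + s * d) * d / f (a + s * d))
      ((deriv (deriv f) (a + t * d) * d * d * f (a + t * d)
        - deriv f (a + t * d) * d * (deriv f (a + t * d) * d)) / f (a + t * d) ^ 2) t :=
  by have h := (((hf2 (a + t * d)).hasDerivAt.comp t (aux_inner a d t)).mul_const d).div
      (aux_fx f hf1 a d t) (hpos _).ne'
     exact h

lemma aux_log_1f' (f : ℝ → ℝ) (hf1 : Differentiable ℝ f) (hf2 : Differentiable ℝ (deriv f))
    (hlt : ∀ x, f x < 1) (a d t : ℝ) :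
    HasDerivAt (fun s => -(deriv f (a + s * d) * d) / (1 - f (a + s * d)))
      ((-(deriv (deriv f) (a + t * d) * d * d) * (1 - f (a + t * d))
        - -(deriv f (a + t * d) * d) * -(deriv f (a + t * d) * d))
          / (1 - f (a + t * d)) ^ 2) t :=
  by have h := ((((hf2 (a + t * d)).hasDerivAt.comp t (aux_inner a d t)).mul_const d).neg).div
      ((aux_fx f hf1 a d t).const_sub 1) (sub_ne_zero.mpr (hlt _).ne')
     exact h

lemma hasDerivAt_term (f : ℝ → ℝ) (hf1 : Differentiable ℝ f)
    (hpos : ∀ x, 0 < f x) (hlt : ∀ x, f x < 1)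
    (y a d t : ℝ) (hy : y = 1 ∨ y = -1) :
    HasDerivAt (fun s : ℝ =>
      (if y = 1 then Real.log (f (a + s * d)) else 0)
        + (if y = -1 then Real.log (1 - f (a + s * d)) else 0)) (D1x f y a d t) t := by
  rcases hy with h | h <;> subst h
  · have e : (fun s : ℝ => (if (1:ℝ) = 1 then Real.log (f (a + s * d)) else 0)
        + (if (1:ℝ) = -1 then Real.log (1 - f (a + s * d)) else 0))
        = fun s => Real.log (f (a + s * d)) := by
      funext s; norm_num
    rw [e]
    simpa [D1x] using aux_log_f f hf1 hpos a d t
  · have e : (fun s : ℝ => (if (-1:ℝ) = 1 then Real.log (f (a + s * d)) else 0)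
        + (if (-1:ℝ) = -1 then Real.log (1 - f (a + s * d)) else 0))
        = fun s => Real.log (1 - f (a + s * d)) := by
      funext s; norm_num
    rw [e]
    have hne : ¬((-1:ℝ) = 1) := by norm_num
    simpa [D1x, hne] using aux_log_1f f hf1 hlt a d t

lemma hasDerivAt_D1x (f : ℝ → ℝ) (hf1 : Differentiable ℝ f) (hf2 : Differentiable ℝ (deriv f))
    (hpos : ∀ x, 0 < f x) (hlt : ∀ x, f x < 1)
    (y a d t : ℝ) (hy : y = 1 ∨ y = -1) :
    HasDerivAt (fun s => D1x f y a d s) (D2x f y a d t) t := by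
  rcases hy with h | h <;> subst h
  · have e : (fun s => D1x f 1 a d s)
        = fun s => deriv f (a + s * d) * d / f (a + s * d) := by
      funext s; simp [D1x]
    rw [e]
    simpa [D2x] using aux_log_f' f hf1 hf2 hpos a d t
  · have hne : ¬((-1:ℝ) = 1) := by norm_num
    have e : (fun s => D1x f (-1) a d s)
        = fun s => -(deriv f (a + s * d) * d) / (1 - f (a + s * d)) := by
      funext s; simp [D1x, hne]
    rw [e]
    simpa [D2x, hne] using aux_log_1f' f hf1 hf2 hlt a d t

lemma term_bound (f : ℝ → ℝ) (γα α a b γ y : ℝ)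
    (hpos : ∀ x, 0 < f x) (hlt : ∀ x, f x < 1)
    (hy : y = 1 ∨ y = -1)
    (ha : |a| ≤ α) (hb : |b| ≤ α) (hγ0 : 0 ≤ γ) (hγ1 : γ ≤ 1)
    (hγα : ∀ x, |x| ≤ α →
      γα ≤ (deriv f x) ^ 2 / (f x) ^ 2 - deriv (deriv f) x / f x ∧
      γα ≤ (deriv f x) ^ 2 / (1 - f x) ^ 2 + deriv (deriv f) x / (1 - f x)) :
    γα * (b - a) ^ 2 ≤ -(D2x f y a (b - a) γ) := by
  have hxb : |a + γ * (b - a)| ≤ α := by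
    rcases abs_le.mp ha with ⟨h1, h2⟩
    rcases abs_le.mp hb with ⟨h3, h4⟩
    rw [abs_le]
    constructor <;> nlinarith
  have hfu : 0 < f (a + γ * (b - a)) := hpos _
  have hfu1 : 0 < 1 - f (a + γ * (b - a)) := by linarith [hlt (a + γ * (b - a))]
  rcases hy with h | h <;> subst h
  · have h1 := (hγα _ hxb).1
    have e : -(D2x f 1 a (b - a) γ)
        = ((deriv f (a + γ * (b - a))) ^ 2 / (f (a + γ * (b - a))) ^ 2
            - deriv (deriv f) (a + γ * (b - a)) / f (a + γ * (b - a))) * (b - a) ^ 2 := by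
      simp only [D2x, if_pos rfl, ↓reduceIte]
      field_simp
      ring
    rw [e]
    exact mul_le_mul_of_nonneg_right h1 (sq_nonneg _)
  · have h2 := (hγα _ hxb).2
    have hne : ¬((-1:ℝ) = 1) := by norm_num
    have e : -(D2x f (-1) a (b - a) γ)
        = ((deriv f (a + γ * (b - a))) ^ 2 / (1 - f (a + γ * (b - a))) ^ 2
            + deriv (deriv f) (a + γ * (b - a)) / (1 - f (a + γ * (b - a)))) * (b - a) ^ 2 := by
      simp only [D2x, if_neg hne]
      field_simp
      ring
    rw [e]
    exact mul_le_mul_of_nonneg_right h2 (sq_nonneg _)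

/-- Lemma 6.3, restricted strong convexity along the segment:
the second derivative of t ↦ F_{Ω,Y}(M* + t(M - M*)) at t = γ is at least
γ_α · ‖(M - M*)_Ω‖_F². -/
theorem one_bit_mc_restricted_strong_convexity
    (m n : ℕ) (α γα γ : ℝ)
    (M Mstar Y : Matrix (Fin m) (Fin n) ℝ)
    (ΩS : Finset (Fin m × Fin n)) (f : ℝ → ℝ)
    -- twice differentiable link f : ℝ → (0,1)
    (hf01 : ∀ x, f x ∈ Set.Ioo (0 : ℝ) 1)
    (hf1 : Differentiable ℝ f) (hf2 : Differentiable ℝ (deriv f))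
    (hY : ∀ i j, Y i j = 1 ∨ Y i j = -1)
    -- ‖M‖_∞ ≤ α and ‖M*‖_∞ ≤ α
    (hMα : ∀ i j, |M i j| ≤ α) (hMstarα : ∀ i j, |Mstar i j| ≤ α)
    -- γ_α as in (5)
    (hγα : ∀ x, |x| ≤ α →
      γα ≤ (deriv f x) ^ 2 / (f x) ^ 2 - deriv (deriv f) x / f x ∧
      γα ≤ (deriv f x) ^ 2 / (1 - f x) ^ 2 + deriv (deriv f) x / (1 - f x))
    (hγ : γ ∈ Set.Icc (0 : ℝ) 1) :
    γα * ∑ p ∈ ΩS, (M p.1 p.2 - Mstar p.1 p.2) ^ 2 ≤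
      iteratedDeriv 2 (fun t : ℝ => FLL ΩS Y f (Mstar + t • (M - Mstar))) γ := by
  classical
  have hpos : ∀ x, 0 < f x := fun x => (hf01 x).1
  have hlt : ∀ x, f x < 1 := fun x => (hf01 x).2
  have hG : ∀ t : ℝ, HasDerivAt (fun s : ℝ => FLL ΩS Y f (Mstar + s • (M - Mstar)))
      (-∑ p ∈ ΩS, D1x f (Y p.1 p.2) (Mstar p.1 p.2) (M p.1 p.2 - Mstar p.1 p.2) t) t := by
    intro t
    have e : (fun s : ℝ => FLL ΩS Y f (Mstar + s • (M - Mstar)))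
        = fun s : ℝ => -∑ p ∈ ΩS,
          ((if Y p.1 p.2 = 1 then
              Real.log (f (Mstar p.1 p.2 + s * (M p.1 p.2 - Mstar p.1 p.2))) else 0)
            + (if Y p.1 p.2 = -1 then
              Real.log (1 - f (Mstar p.1 p.2 + s * (M p.1 p.2 - Mstar p.1 p.2))) else 0)) := by
      funext s
      simp [FLL, Matrix.add_apply, Matrix.smul_apply, Matrix.sub_apply, smul_eq_mul]
    rw [e]
    exact (HasDerivAt.fun_sum fun p _ =>
      hasDerivAt_term f hf1 hpos hlt _ _ _ t (hY p.1 p.2)).neg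
  have hd1 : deriv (fun s : ℝ => FLL ΩS Y f (Mstar + s • (M - Mstar)))
      = fun t => -∑ p ∈ ΩS, D1x f (Y p.1 p.2) (Mstar p.1 p.2) (M p.1 p.2 - Mstar p.1 p.2) t :=
    funext fun t => (hG t).deriv
  have hG2 : HasDerivAt
      (fun t : ℝ => -∑ p ∈ ΩS, D1x f (Y p.1 p.2) (Mstar p.1 p.2) (M p.1 p.2 - Mstar p.1 p.2) t)
      (-∑ p ∈ ΩS, D2x f (Y p.1 p.2) (Mstar p.1 p.2) (M p.1 p.2 - Mstar p.1 p.2) γ) γ :=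
    (HasDerivAt.fun_sum fun p _ =>
      hasDerivAt_D1x f hf1 hf2 hpos hlt _ _ _ γ (hY p.1 p.2)).neg
  have hiter : iteratedDeriv 2 (fun t : ℝ => FLL ΩS Y f (Mstar + t • (M - Mstar))) γ
      = -∑ p ∈ ΩS, D2x f (Y p.1 p.2) (Mstar p.1 p.2) (M p.1 p.2 - Mstar p.1 p.2) γ := by
    rw [show (2:ℕ) = 1 + 1 from rfl, iteratedDeriv_succ, iteratedDeriv_one, hd1]
    exact hG2.deriv
  rw [hiter, Finset.mul_sum]
  have : -∑ p ∈ ΩS, D2x f (Y p.1 p.2) (Mstar p.1 p.2) (M p.1 p.2 - Mstar p.1 p.2) γ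
      = ∑ p ∈ ΩS, -(D2x f (Y p.1 p.2) (Mstar p.1 p.2) (M p.1 p.2 - Mstar p.1 p.2) γ) := by
    rw [Finset.sum_neg_distrib]
  rw [this]
  refine Finset.sum_le_sum fun p _ => ?_
  exact term_bound f γα α (Mstar p.1 p.2) (M p.1 p.2) γ (Y p.1 p.2) hpos hlt
    (hY p.1 p.2) (hMstarα p.1 p.2) (hMα p.1 p.2) hγ.1 hγ.2 hγα
end
end

section
/- (Spectral deviation of the sampled matrix, max-norm version.) Let m ≥ n and let the bi-adjacency matrix G of Ω satisfy assumptions (A1) and (A2). Then for every Z ∈ ℝ^{m×n}, ‖ (√(mn)/σ₁(G))·R_Ω(Z) − Z ‖₂ ≤ (√(mn)·σ₂(G)/σ₁(G)) · ‖Z‖_max. -/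
open MeasureTheory ProbabilityTheory

noncomputable section

namespace OneBitAux


lemma cs_sum {k : ℕ} (v w : Fin k → ℝ) :
    ∑ i, v i * w i ≤ Real.sqrt (∑ i, v i ^ 2) * Real.sqrt (∑ i, w i ^ 2) := by
  have h := Finset.sum_mul_sq_le_sq_mul_sq Finset.univ v w
  calc ∑ i, v i * w i ≤ |∑ i, v i * w i| := le_abs_self _
    _ = Real.sqrt ((∑ i, v i * w i) ^ 2) := (Real.sqrt_sq_eq_abs _).symm
    _ ≤ Real.sqrt ((∑ i, v i ^ 2) * ∑ i, w i ^ 2) := Real.sqrt_le_sqrt h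
    _ = _ := Real.sqrt_mul (by positivity) _

lemma specSet_bddAbove {m n : ℕ} (A : Matrix (Fin m) (Fin n) ℝ) :
    BddAbove {c : ℝ | ∃ x : Fin n → ℝ, (∑ j, (x j) ^ 2) ≤ 1 ∧
      c = Real.sqrt (∑ i, (A.mulVec x i) ^ 2)} := by
  refine ⟨Real.sqrt (∑ i, ∑ j, (A i j) ^ 2), ?_⟩
  rintro c ⟨x, hx, rfl⟩
  apply Real.sqrt_le_sqrt
  apply Finset.sum_le_sum
  intro i _
  have h := Finset.sum_mul_sq_le_sq_mul_sq Finset.univ (fun j => A i j) x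
  calc (A.mulVec x i) ^ 2 = (∑ j, A i j * x j) ^ 2 := by rfl
    _ ≤ (∑ j, (A i j) ^ 2) * ∑ j, (x j) ^ 2 := h
    _ ≤ (∑ j, (A i j) ^ 2) * 1 := by
        apply mul_le_mul_of_nonneg_left hx (by positivity)
    _ = ∑ j, (A i j) ^ 2 := mul_one _

lemma specNorm_nonneg {m n : ℕ} (A : Matrix (Fin m) (Fin n) ℝ) : 0 ≤ specNorm A := by
  apply Real.sSup_nonneg
  rintro c ⟨x, hx, rfl⟩
  exact Real.sqrt_nonneg _

lemma le_specNorm {m n : ℕ} (A : Matrix (Fin m) (Fin n) ℝ) (x : Fin n → ℝ)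
    (hx : (∑ j, (x j) ^ 2) ≤ 1) :
    Real.sqrt (∑ i, (A.mulVec x i) ^ 2) ≤ specNorm A :=
  le_csSup (specSet_bddAbove A) ⟨x, hx, rfl⟩

lemma specNorm_le {m n : ℕ} (A : Matrix (Fin m) (Fin n) ℝ) (c : ℝ)
    (h : ∀ x : Fin n → ℝ, (∑ j, (x j) ^ 2) ≤ 1 →
      Real.sqrt (∑ i, (A.mulVec x i) ^ 2) ≤ c) : specNorm A ≤ c := by
  have h0 : (0:ℝ) ≤ c := by
    have := h 0 (by simp)
    simpa [Matrix.mulVec_zero] using this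
  exact Real.sSup_le (by rintro _ ⟨x, hx, rfl⟩; exact h x hx) h0

lemma norm_mulVec_le {m n : ℕ} (A : Matrix (Fin m) (Fin n) ℝ) (x : Fin n → ℝ) :
    Real.sqrt (∑ i, (A.mulVec x i) ^ 2) ≤ specNorm A * Real.sqrt (∑ j, (x j) ^ 2) := by
  by_cases hx : (∑ j, (x j) ^ 2) = 0
  · have hx0 : x = 0 := by
      funext j
      have := (Finset.sum_eq_zero_iff_of_nonneg (fun j _ => sq_nonneg (x j))).mp hx j
        (Finset.mem_univ j)
      exact pow_eq_zero_iff (by norm_num) |>.mp this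
    subst hx0
    have : A.mulVec (0 : Fin n → ℝ) = 0 := Matrix.mulVec_zero A
    rw [this]
    simp only [Pi.zero_apply, ne_eq, OfNat.ofNat_ne_zero, not_false_eq_true, zero_pow,
      Finset.sum_const_zero, Real.sqrt_zero]
    exact le_of_eq (mul_zero (specNorm A)).symm
  · have hxpos : 0 < ∑ j, (x j) ^ 2 :=
      lt_of_le_of_ne (Finset.sum_nonneg fun j _ => sq_nonneg _) (Ne.symm hx)
    set s := Real.sqrt (∑ j, (x j) ^ 2) with hs
    have hspos : 0 < s := Real.sqrt_pos.mpr hxpos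
    have hs2 : s ^ 2 = ∑ j, (x j) ^ 2 := Real.sq_sqrt hxpos.le
    set u : Fin n → ℝ := fun j => s⁻¹ * x j with hu
    have hu1 : (∑ j, (u j) ^ 2) = 1 := by
      simp only [hu, mul_pow, ← Finset.mul_sum]
      rw [← hs2]
      field_simp
    have hkey : ∀ i, A.mulVec x i = s * A.mulVec u i := by
      intro i
      simp only [Matrix.mulVec, dotProduct, hu, Finset.mul_sum]
      apply Finset.sum_congr rfl
      intro j _
      field_simp
    calc Real.sqrt (∑ i, (A.mulVec x i) ^ 2)
        = Real.sqrt (∑ i, s ^ 2 * (A.mulVec u i) ^ 2) := by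
          congr 1; apply Finset.sum_congr rfl; intro i _; rw [hkey i]; ring
      _ = s * Real.sqrt (∑ i, (A.mulVec u i) ^ 2) := by
          rw [← Finset.mul_sum, Real.sqrt_mul (sq_nonneg s), Real.sqrt_sq hspos.le]
      _ ≤ s * specNorm A := by
          apply mul_le_mul_of_nonneg_left (le_specNorm A u hu1.le) hspos.le
      _ = specNorm A * s := mul_comm _ _

lemma sqrt_sum_sq_le_of_dot {k : ℕ} (w : Fin k → ℝ) (a : ℝ)
    (h : ∀ x : Fin k → ℝ, (∑ i, (x i) ^ 2) ≤ 1 → (∑ i, x i * w i) ≤ a) :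
    Real.sqrt (∑ i, (w i) ^ 2) ≤ a := by
  by_cases hw : (∑ i, (w i) ^ 2) = 0
  · rw [hw, Real.sqrt_zero]
    have := h 0 (by simp)
    simpa using this
  · have hwpos : 0 < ∑ i, (w i) ^ 2 :=
      lt_of_le_of_ne (Finset.sum_nonneg fun i _ => sq_nonneg _) (Ne.symm hw)
    set s := Real.sqrt (∑ i, (w i) ^ 2) with hs
    have hspos : 0 < s := Real.sqrt_pos.mpr hwpos
    have hs2 : s ^ 2 = ∑ i, (w i) ^ 2 := Real.sq_sqrt hwpos.le
    have h1 : (∑ i, (s⁻¹ * w i) ^ 2) ≤ 1 := by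
      simp only [mul_pow, ← Finset.mul_sum, ← hs2]
      field_simp
      exact le_refl _
    have h2 := h (fun i => s⁻¹ * w i) h1
    have h3 : (∑ i, (s⁻¹ * w i) * w i) = s := by
      simp only [mul_assoc, ← Finset.mul_sum]
      have hww : (∑ i, w i * w i) = ∑ i, (w i) ^ 2 := by
        apply Finset.sum_congr rfl; intro i _; ring
      rw [hww, ← hs2]
      field_simp
    linarith [h3 ▸ h2]



set_option maxHeartbeats 1000000 in
lemma EY_aux {m n : ℕ} (hm : 0 < m) (hn : 0 < n)
    (G : Matrix (Fin m) (Fin n) ℝ) (τ : ℝ)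
    (hGv : G.mulVec (fun _ => 1 / Real.sqrt n) = fun _ => specNorm G / Real.sqrt m)
    (hGTu : G.transpose.mulVec (fun _ => 1 / Real.sqrt m) = fun _ => specNorm G / Real.sqrt n)
    (hτ : τ = specNorm G / (Real.sqrt m * Real.sqrt n))
    (B : Matrix (Fin m) (Fin n) ℝ) (hB : B.rank ≤ 1) :
    specNorm (G - Matrix.of (fun _ _ => τ)) ≤ specNorm (G - B) := by
  have hmR : (0:ℝ) < m := by exact_mod_cast hm
  have hnR : (0:ℝ) < n := by exact_mod_cast hn
  have hsm : (0:ℝ) < Real.sqrt m := Real.sqrt_pos.mpr hmR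
  have hsn : (0:ℝ) < Real.sqrt n := Real.sqrt_pos.mpr hnR
  have hsm2 : (Real.sqrt m) ^ 2 = (m:ℝ) := Real.sq_sqrt hmR.le
  have hsn2 : (Real.sqrt n) ^ 2 = (n:ℝ) := Real.sq_sqrt hnR.le
  set σ := specNorm G with hσ
  set H : Matrix (Fin m) (Fin n) ℝ := G - Matrix.of (fun _ _ => τ) with hH
  set v1 : Fin n → ℝ := fun _ => 1 / Real.sqrt n with hv1
  have hHmul : ∀ y : Fin n → ℝ, ∀ i, H.mulVec y i = G.mulVec y i - τ * ∑ j, y j := by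
    intro y i
    simp only [hH, Matrix.sub_mulVec, Pi.sub_apply]
    congr 1
    simp only [Matrix.mulVec, dotProduct, Matrix.of_apply, Finset.mul_sum]
  have hHzero : ∀ y : Fin n → ℝ, (∑ j, y j) = 0 → H.mulVec y = G.mulVec y := by
    intro y hy
    funext i
    rw [hHmul y i, hy, mul_zero, sub_zero]
  have hτn : τ * Real.sqrt n = σ / Real.sqrt m := by
    rw [hτ, div_mul_eq_mul_div, mul_comm (Real.sqrt m) (Real.sqrt n), ← div_div,
      mul_div_assoc, div_self hsn.ne', mul_one]
  have hτm : τ * Real.sqrt m = σ / Real.sqrt n := by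
    rw [hτ, div_mul_eq_mul_div, ← div_div, mul_div_assoc, div_self hsm.ne', mul_one]
  have hHv1 : H.mulVec v1 = 0 := by
    funext i
    rw [hHmul v1 i]
    have h1 : (∑ j : Fin n, v1 j) = Real.sqrt n := by
      simp only [hv1, Finset.sum_const, Finset.card_univ, Fintype.card_fin, nsmul_eq_mul,
        mul_one_div]
      exact Real.div_sqrt
    rw [h1, hτn, congrFun hGv i]
    simp
  have hHTu : ∀ t : Fin n → ℝ, (∑ i, (1 / Real.sqrt m) * H.mulVec t i) = 0 := by
    intro t
    have swap : (∑ i, (1 / Real.sqrt m) * H.mulVec t i)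
        = ∑ j, (H.transpose.mulVec (fun _ => 1 / Real.sqrt m) j) * t j := by
      simp only [Matrix.mulVec, dotProduct, Matrix.transpose_apply, Finset.mul_sum,
        Finset.sum_mul]
      rw [Finset.sum_comm]
      apply Finset.sum_congr rfl; intro j _
      apply Finset.sum_congr rfl; intro i _
      ring
    rw [swap]
    have hHT : H.transpose.mulVec (fun _ => 1 / Real.sqrt m) = 0 := by
      funext j
      have he : H.transpose.mulVec (fun _ => 1 / Real.sqrt m) j
          = G.transpose.mulVec (fun _ => 1 / Real.sqrt m) j
            - τ * ∑ _i : Fin m, (1 / Real.sqrt m) := by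
        simp only [hH, Matrix.transpose_sub, Matrix.sub_mulVec, Pi.sub_apply]
        congr 1
        simp only [Matrix.mulVec, dotProduct, Matrix.transpose_apply, Matrix.of_apply,
          Finset.mul_sum]
      rw [he]
      have h1 : (∑ _i : Fin m, (1 / Real.sqrt m)) = Real.sqrt m := by
        simp only [Finset.sum_const, Finset.card_univ, Fintype.card_fin, nsmul_eq_mul,
          mul_one_div]
        exact Real.div_sqrt
      rw [h1, hτm, congrFun hGTu j]
      simp
    rw [hHT]
    simp
  -- main estimate
  apply specNorm_le
  intro y hy
  set α : ℝ := (∑ j, y j) / Real.sqrt n with hα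
  set z : Fin n → ℝ := fun j => y j - α * v1 j with hz
  have hysum : (∑ j, y j) = α * Real.sqrt n := by rw [hα]; field_simp
  have hv1sum : (∑ j : Fin n, v1 j) = Real.sqrt n := by
    simp only [hv1, Finset.sum_const, Finset.card_univ, Fintype.card_fin, nsmul_eq_mul,
      mul_one_div]
    exact Real.div_sqrt
  have hzsum : (∑ j, z j) = 0 := by
    have e : (∑ j, z j) = (∑ j, y j) - α * ∑ j, v1 j := by
      rw [Finset.mul_sum, ← Finset.sum_sub_distrib]
    rw [e, hv1sum, hysum, sub_self]
  have hzy : z = y - α • v1 := by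
    funext j
    simp only [hz, Pi.sub_apply, Pi.smul_apply, smul_eq_mul]
  have hHzy : H.mulVec z = H.mulVec y := by
    rw [hzy, Matrix.mulVec_sub, Matrix.mulVec_smul, hHv1]
    simp
  have hv1sq : (∑ j : Fin n, (v1 j) ^ 2) = 1 := by
    simp only [hv1, div_pow, one_pow, hsn2, Finset.sum_const, Finset.card_univ,
      Fintype.card_fin, nsmul_eq_mul]
    field_simp
  have hv1y : (∑ j, v1 j * y j) = α := by
    have e : (∑ j, v1 j * y j) = (∑ j, y j) / Real.sqrt n := by
      rw [Finset.sum_div]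
      apply Finset.sum_congr rfl; intro j _
      simp only [hv1]; ring
    rw [e, hα]
  have hz2 : (∑ j, (z j) ^ 2) = (∑ j, (y j) ^ 2) - α ^ 2 := by
    have e : (∑ j, (z j) ^ 2)
        = (∑ j, (y j) ^ 2) - 2 * α * (∑ j, v1 j * y j) + α ^ 2 * (∑ j, (v1 j) ^ 2) := by
      rw [Finset.mul_sum, Finset.mul_sum, ← Finset.sum_sub_distrib, ← Finset.sum_add_distrib]
      apply Finset.sum_congr rfl; intro j _
      simp only [hz]; ring
    rw [e, hv1y, hv1sq]; ring
  have hz2le : (∑ j, (z j) ^ 2) ≤ 1 := by rw [hz2]; nlinarith [sq_nonneg α]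
  have hGBnn : 0 ≤ specNorm (G - B) := specNorm_nonneg _
  by_cases hzz : (∑ j, (z j) ^ 2) = 0
  · have hz0 : z = 0 := by
      funext j
      have := (Finset.sum_eq_zero_iff_of_nonneg (fun j _ => sq_nonneg (z j))).mp hzz j
        (Finset.mem_univ j)
      exact pow_eq_zero_iff (by norm_num) |>.mp this
    have h0 : H.mulVec y = 0 := by rw [← hHzy, hz0, Matrix.mulVec_zero]
    rw [h0]
    simpa using hGBnn
  · have hzpos : 0 < ∑ j, (z j) ^ 2 :=
      lt_of_le_of_ne (Finset.sum_nonneg fun j _ => sq_nonneg _) (Ne.symm hzz)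
    set s := Real.sqrt (∑ j, (z j) ^ 2) with hs
    have hspos : 0 < s := Real.sqrt_pos.mpr hzpos
    have hs2 : s ^ 2 = ∑ j, (z j) ^ 2 := Real.sq_sqrt hzpos.le
    have hsle1 : s ≤ 1 := Real.sqrt_le_one.mpr hz2le
    set t : Fin n → ℝ := fun j => z j / s with ht
    have ht1 : (∑ j, (t j) ^ 2) = 1 := by
      simp only [ht, div_pow, ← Finset.sum_div, ← hs2]
      field_simp
    have htsum : (∑ j, t j) = 0 := by
      simp only [ht, ← Finset.sum_div, hzsum, zero_div]
    have hzt : z = s • t := by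
      funext j; simp only [ht, Pi.smul_apply, smul_eq_mul]
      field_simp
    have hHts : H.mulVec y = s • H.mulVec t := by
      rw [← hHzy, hzt, Matrix.mulVec_smul]
    set p : Fin m → ℝ := H.mulVec t with hp
    have key : Real.sqrt (∑ i, (p i) ^ 2) ≤ specNorm (G - B) := by
      have hGt : G.mulVec t = p := by rw [hp, hHzero t htsum]
      have hpsum : (∑ i, p i) = 0 := by
        have h0 := hHTu t
        rw [← Finset.mul_sum] at h0
        have hne : (1 : ℝ) / Real.sqrt m ≠ 0 := by positivity
        exact (mul_eq_zero.mp h0).resolve_left hne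
      have hpσ : (∑ i, (p i) ^ 2) ≤ σ ^ 2 := by
        have h1 : Real.sqrt (∑ i, (p i) ^ 2) ≤ σ := by
          rw [← hGt]
          exact le_specNorm G t ht1.le
        have h2 : (∑ i, (p i) ^ 2) = (Real.sqrt (∑ i, (p i) ^ 2)) ^ 2 :=
          (Real.sq_sqrt (Finset.sum_nonneg fun i _ => sq_nonneg _)).symm
        rw [h2]
        exact pow_le_pow_left₀ (Real.sqrt_nonneg _) h1 2
      obtain ⟨a, b, hab, hBw⟩ : ∃ a b : ℝ, a ^ 2 + b ^ 2 = 1 ∧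
          B.mulVec (fun j => a * v1 j + b * t j) = 0 := by
        set bv := B.mulVec v1 with hbv_def
        set bt := B.mulVec t with hbt_def
        have hlin : ∀ (a b : ℝ), B.mulVec (fun j => a * v1 j + b * t j)
            = a • bv + b • bt := by
          intro a b
          have e : (fun j => a * v1 j + b * t j) = a • v1 + b • t := by
            funext j; simp
          rw [e, Matrix.mulVec_add, Matrix.mulVec_smul, Matrix.mulVec_smul]
        by_cases hbv : bv = 0
        · refine ⟨1, 0, by norm_num, ?_⟩
          rw [hlin, hbv]
          simp
        · have hrangev : bv ∈ LinearMap.range B.mulVecLin :=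
            ⟨v1, by simp [Matrix.mulVecLin_apply, hbv_def]⟩
          have hranget : bt ∈ LinearMap.range B.mulVecLin :=
            ⟨t, by simp [Matrix.mulVecLin_apply, hbt_def]⟩
          have hspan : Submodule.span ℝ {bv} = LinearMap.range B.mulVecLin := by
            apply Submodule.eq_of_le_of_finrank_le
            · rw [Submodule.span_le, Set.singleton_subset_iff]
              exact hrangev
            · rw [finrank_span_singleton hbv]
              exact hB
          have hbt2 : bt ∈ Submodule.span ℝ ({bv} : Set (Fin m → ℝ)) := by
            rw [hspan]; exact hranget
          obtain ⟨c, hc⟩ := Submodule.mem_span_singleton.mp hbt2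
          set r := Real.sqrt (c ^ 2 + 1) with hr
          have hrpos : 0 < r := Real.sqrt_pos.mpr (by positivity)
          have hr2 : r ^ 2 = c ^ 2 + 1 := Real.sq_sqrt (by positivity)
          refine ⟨-c / r, 1 / r, ?_, ?_⟩
          · field_simp
            rw [hr2]
          · rw [hlin, ← hc]
            funext i
            simp only [Pi.add_apply, Pi.smul_apply, smul_eq_mul, Pi.zero_apply]
            field_simp
            ring
      set w : Fin n → ℝ := fun j => a * v1 j + b * t j with hw
      have hvt : (∑ j, v1 j * t j) = 0 := by
        have e : (∑ j, v1 j * t j) = (∑ j, t j) / Real.sqrt n := by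
          rw [Finset.sum_div]
          apply Finset.sum_congr rfl; intro j _
          simp only [hv1]; ring
        rw [e, htsum, zero_div]
      have hw2 : (∑ j, (w j) ^ 2) = 1 := by
        have e : (∑ j, (w j) ^ 2)
            = a ^ 2 * (∑ j, (v1 j) ^ 2) + 2 * (a * b) * (∑ j, v1 j * t j)
              + b ^ 2 * (∑ j, (t j) ^ 2) := by
          rw [Finset.mul_sum, Finset.mul_sum, Finset.mul_sum, ← Finset.sum_add_distrib,
            ← Finset.sum_add_distrib]
          apply Finset.sum_congr rfl; intro j _
          simp only [hw]; ring
        rw [e, hv1sq, ht1, hvt]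
        linear_combination hab
      have hGBw : (G - B).mulVec w = G.mulVec w := by
        rw [Matrix.sub_mulVec, hBw]
        simp
      have hGweq : ∀ i, G.mulVec w i = a * (σ / Real.sqrt m) + b * p i := by
        intro i
        have hws : (w : Fin n → ℝ) = a • v1 + b • t := by
          funext j; simp [hw]
        rw [hws, Matrix.mulVec_add, Matrix.mulVec_smul, Matrix.mulVec_smul, hGv, hGt]
        simp
      have hsm' : (σ / Real.sqrt m) ^ 2 = σ ^ 2 / m := by rw [div_pow, hsm2]
      have hsumGw : (∑ i, (G.mulVec w i) ^ 2) = a ^ 2 * σ ^ 2 + b ^ 2 * ∑ i, (p i) ^ 2 := by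
        have e : (∑ i, (G.mulVec w i) ^ 2)
            = (∑ _i : Fin m, a ^ 2 * (σ / Real.sqrt m) ^ 2)
              + (∑ i, 2 * (a * b * (σ / Real.sqrt m)) * p i)
              + (∑ i, b ^ 2 * (p i) ^ 2) := by
          rw [← Finset.sum_add_distrib, ← Finset.sum_add_distrib]
          apply Finset.sum_congr rfl; intro i _
          rw [hGweq i]; ring
        have e3 : (∑ _i : Fin m, a ^ 2 * (σ / Real.sqrt m) ^ 2) = a ^ 2 * σ ^ 2 := by
          rw [Finset.sum_const, Finset.card_univ, Fintype.card_fin, nsmul_eq_mul, hsm']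
          field_simp
        have e4 : (∑ i, 2 * (a * b * (σ / Real.sqrt m)) * p i) = 0 := by
          rw [← Finset.mul_sum, hpsum, mul_zero]
        have e5 : (∑ i, b ^ 2 * (p i) ^ 2) = b ^ 2 * ∑ i, (p i) ^ 2 :=
          (Finset.mul_sum _ _ _).symm
        rw [e, e3, e4, e5, add_zero]
      have hge : (∑ i, (p i) ^ 2) ≤ ∑ i, ((G - B).mulVec w i) ^ 2 := by
        rw [hGBw, hsumGw]
        nlinarith [sq_nonneg a, sq_nonneg b,
          Finset.sum_nonneg (fun i (_ : i ∈ Finset.univ) => sq_nonneg (p i))]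
      calc Real.sqrt (∑ i, (p i) ^ 2)
          ≤ Real.sqrt (∑ i, ((G - B).mulVec w i) ^ 2) := Real.sqrt_le_sqrt hge
        _ ≤ specNorm (G - B) := le_specNorm _ w hw2.le
    have hrw : (∑ i, (H.mulVec y i) ^ 2) = s ^ 2 * ∑ i, (p i) ^ 2 := by
      rw [hHts, Finset.mul_sum]
      apply Finset.sum_congr rfl
      intro i _
      simp only [Pi.smul_apply, smul_eq_mul, hp]
      ring
    rw [hrw, Real.sqrt_mul (sq_nonneg s), Real.sqrt_sq hspos.le]
    calc s * Real.sqrt (∑ i, (p i) ^ 2) ≤ 1 * specNorm (G - B) :=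
        mul_le_mul hsle1 key (Real.sqrt_nonneg _) zero_le_one
      _ = specNorm (G - B) := one_mul _


end OneBitAux

/-- Lemma 6.4, max-norm version: under (A1)–(A2), for every Z,
‖ (√(mn)/σ₁(G))·R_Ω(Z) − Z ‖₂ ≤ (√(mn)·σ₂(G)/σ₁(G))·‖Z‖_max. -/
theorem one_bit_mc_sampling_deviation_maxnorm
    (m n d : ℕ) (C : ℝ)
    (G : Matrix (Fin m) (Fin n) ℝ)
    (ΩS : Finset (Fin m × Fin n))
    (hn : 0 < n) (hnm : n ≤ m) (hd : 0 < d)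
    -- G is the bi-adjacency (0/1) matrix of Ω, with d nonzero entries per row
    (hGΩ : ∀ i j, ((i, j) ∈ ΩS ↔ G i j = 1))
    (hG01 : ∀ i j, G i j = 0 ∨ G i j = 1)
    (hrow : ∀ i, ∑ j, G i j = (d : ℝ))
    -- assumptions (A1) and (A2)
    (hA1 : AssumpA1 G)
    (hC : 0 < C) (hA2 : sigma2 G ≤ C * Real.sqrt d) :
    ∀ Z : Matrix (Fin m) (Fin n) ℝ,
      specNorm ((Real.sqrt ((m : ℝ) * n) / specNorm G) • samp ΩS Z - Z) ≤
        Real.sqrt ((m : ℝ) * n) * sigma2 G / specNorm G * maxNorm Z := by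
  obtain ⟨hGv, hGTu⟩ := hA1
  intro Z
  have hm : 0 < m := lt_of_lt_of_le hn hnm
  have hmR : (0:ℝ) < m := by exact_mod_cast hm
  have hnR : (0:ℝ) < n := by exact_mod_cast hn
  have hdR : (0:ℝ) < d := by exact_mod_cast hd
  have hsm : (0:ℝ) < Real.sqrt m := Real.sqrt_pos.mpr hmR
  have hsn : (0:ℝ) < Real.sqrt n := Real.sqrt_pos.mpr hnR
  set σ := specNorm G with hσ
  have hσd : σ / Real.sqrt m = (d:ℝ) / Real.sqrt n := by
    have h1 := congrFun hGv (⟨0, hm⟩ : Fin m)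
    have h2 : G.mulVec (fun _ => 1 / Real.sqrt n) (⟨0, hm⟩ : Fin m) = (d:ℝ) / Real.sqrt n := by
      simp only [Matrix.mulVec, dotProduct, mul_one_div]
      rw [← Finset.sum_div, hrow]
    rw [← h1, h2]
  have hσpos : 0 < σ := by
    have h1 : 0 < σ / Real.sqrt m := by rw [hσd]; positivity
    calc (0:ℝ) < σ / Real.sqrt m * Real.sqrt m := mul_pos h1 hsm
      _ = σ := div_mul_cancel₀ σ hsm.ne'
  have hσ2nn : 0 ≤ sigma2 G := by
    apply Real.sInf_nonneg
    rintro c ⟨B, hB, rfl⟩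
    exact OneBitAux.specNorm_nonneg _
  set τ := σ / (Real.sqrt m * Real.sqrt n) with hτ
  set H : Matrix (Fin m) (Fin n) ℝ := G - Matrix.of (fun _ _ => τ) with hHdef
  have hHσ2 : specNorm H ≤ sigma2 G := by
    apply le_csInf
    · exact ⟨specNorm (G - 0), 0, by simp [Matrix.rank_zero], rfl⟩
    · rintro c ⟨B, hB, rfl⟩
      exact OneBitAux.EY_aux hm hn G τ hGv hGTu hτ B hB
  have hHnn : 0 ≤ specNorm H := OneBitAux.specNorm_nonneg _
  have hsqmn : Real.sqrt ((m:ℝ) * n) = Real.sqrt m * Real.sqrt n :=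
    Real.sqrt_mul (by positivity) _
  set κ0 : ℝ := Real.sqrt ((m:ℝ) * n) / σ with hκ0
  have hκ0pos : 0 < κ0 := by rw [hκ0, hsqmn]; positivity
  have hκτ : κ0 * τ = 1 := by
    rw [hκ0, hτ, hsqmn]
    field_simp
  have hsamp : ∀ i j, samp ΩS Z i j = G i j * Z i j := by
    intro i j
    by_cases hij : (i, j) ∈ ΩS
    · simp [samp, hij, (hGΩ i j).mp hij]
    · have hG0 : G i j = 0 := (hG01 i j).resolve_right (fun h => hij ((hGΩ i j).mpr h))
      simp [samp, hij, hG0]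
  set Δ : Matrix (Fin m) (Fin n) ℝ := κ0 • samp ΩS Z - Z with hΔ
  have hΔ_entry : ∀ i j, Δ i j = κ0 * (H i j * Z i j) := by
    intro i j
    simp only [hΔ, Matrix.sub_apply, Matrix.smul_apply, smul_eq_mul, hsamp i j, hHdef,
      Matrix.of_apply]
    linear_combination Z i j * hκτ
  set S : Set ℝ := {c : ℝ | ∃ (k : ℕ) (U : Matrix (Fin m) (Fin k) ℝ)
      (V : Matrix (Fin n) (Fin k) ℝ), Z = U * V.transpose ∧
      c = max (⨆ i, ∑ ℓ, (U i ℓ) ^ 2) (⨆ j, ∑ ℓ, (V j ℓ) ^ 2)} with hSdef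
  have hmaxS : maxNorm Z = sInf S := rfl
  have hSne : S.Nonempty := by
    refine ⟨_, ⟨n, Z, 1, ?_, rfl⟩⟩
    rw [Matrix.transpose_one, Matrix.mul_one]
  have hSnonneg : ∀ c ∈ S, 0 ≤ c := by
    rintro c ⟨k, U, V, hZ', rfl⟩
    have h1 : (∑ ℓ, (U (⟨0, hm⟩ : Fin m) ℓ) ^ 2) ≤ ⨆ i, ∑ ℓ, (U i ℓ) ^ 2 :=
      le_ciSup (f := fun i : Fin m => ∑ ℓ, (U i ℓ) ^ 2)
        (Set.Finite.bddAbove (Set.finite_range _)) _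
    exact le_trans (le_trans (Finset.sum_nonneg fun _ _ => sq_nonneg _) h1) (le_max_left _ _)
  have hM0 : 0 ≤ maxNorm Z := by
    rw [hmaxS]
    exact Real.sInf_nonneg hSnonneg
  have main : ∀ c ∈ S, specNorm Δ ≤ κ0 * specNorm H * c := by
    rintro c ⟨k, U, V, hZ, rfl⟩
    set sU : ℝ := ⨆ i, ∑ ℓ, (U i ℓ) ^ 2 with hsU
    set sV : ℝ := ⨆ j, ∑ ℓ, (V j ℓ) ^ 2 with hsV
    have hsU_le : ∀ i, (∑ ℓ, (U i ℓ) ^ 2) ≤ sU := fun i =>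
      le_ciSup (f := fun i : Fin m => ∑ ℓ, (U i ℓ) ^ 2)
        (Set.Finite.bddAbove (Set.finite_range _)) i
    have hsV_le : ∀ j, (∑ ℓ, (V j ℓ) ^ 2) ≤ sV := fun j =>
      le_ciSup (f := fun j : Fin n => ∑ ℓ, (V j ℓ) ^ 2)
        (Set.Finite.bddAbove (Set.finite_range _)) j
    have hsU0 : 0 ≤ sU :=
      le_trans (Finset.sum_nonneg fun ℓ _ => sq_nonneg _) (hsU_le ⟨0, hm⟩)
    have hsV0 : 0 ≤ sV :=
      le_trans (Finset.sum_nonneg fun ℓ _ => sq_nonneg _) (hsV_le ⟨0, hn⟩)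
    set c := max sU sV with hc
    have hc0 : 0 ≤ c := le_trans hsU0 (le_max_left _ _)
    have hZ_entry : ∀ i j, Z i j = ∑ ℓ, U i ℓ * V j ℓ := by
      intro i j
      rw [hZ]
      simp [Matrix.mul_apply, Matrix.transpose_apply]
    apply OneBitAux.specNorm_le
    intro y hy
    apply OneBitAux.sqrt_sum_sq_le_of_dot
    intro x hx
    set q : Fin k → Fin n → ℝ := fun ℓ j => y j * V j ℓ with hq
    set T : Fin k → ℝ := fun ℓ => ∑ i, (x i * U i ℓ) * (H.mulVec (q ℓ) i) with hT
    have E : (∑ i, x i * Δ.mulVec y i) = κ0 * ∑ ℓ, T ℓ := by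
      have e1 : (∑ i, x i * Δ.mulVec y i)
          = ∑ i, ∑ j, ∑ ℓ, (κ0 * ((x i * U i ℓ) * (H i j * (y j * V j ℓ)))) := by
        apply Finset.sum_congr rfl; intro i _
        have e2 : x i * Δ.mulVec y i = ∑ j, x i * (Δ i j * y j) := by
          simp only [Matrix.mulVec, dotProduct, Finset.mul_sum]
        rw [e2]
        apply Finset.sum_congr rfl; intro j _
        rw [hΔ_entry i j, hZ_entry i j]
        rw [show x i * (κ0 * (H i j * ∑ ℓ, U i ℓ * V j ℓ) * y j)
            = (κ0 * (x i * (H i j * y j))) * ∑ ℓ, U i ℓ * V j ℓ from by ring,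
          Finset.mul_sum]
        apply Finset.sum_congr rfl; intro ℓ _; ring
      rw [e1]
      have e4 : κ0 * ∑ ℓ, T ℓ
          = ∑ ℓ, ∑ i, κ0 * ((x i * U i ℓ) * H.mulVec (q ℓ) i) := by
        simp only [hT]
        rw [Finset.mul_sum]
        exact Finset.sum_congr rfl fun ℓ _ => Finset.mul_sum _ _ _
      rw [e4]
      have e3 : ∀ i : Fin m, (∑ j, ∑ ℓ, (κ0 * ((x i * U i ℓ) * (H i j * (y j * V j ℓ)))))
          = ∑ ℓ, ∑ j, (κ0 * ((x i * U i ℓ) * (H i j * (y j * V j ℓ)))) := fun i =>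
        Finset.sum_comm
      rw [Finset.sum_congr rfl fun i _ => e3 i, Finset.sum_comm]
      apply Finset.sum_congr rfl; intro ℓ _
      apply Finset.sum_congr rfl; intro i _
      rw [show κ0 * ((x i * U i ℓ) * H.mulVec (q ℓ) i)
          = (κ0 * (x i * U i ℓ)) * ∑ j, H i j * (y j * V j ℓ) from by
        simp only [Matrix.mulVec, dotProduct, hq]; ring,
        Finset.mul_sum]
      apply Finset.sum_congr rfl; intro j _; ring
    have Pdef : ∀ ℓ, T ℓ ≤ Real.sqrt (∑ i, (x i * U i ℓ) ^ 2)
        * (specNorm H * Real.sqrt (∑ j, (q ℓ j) ^ 2)) := by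
      intro ℓ
      simp only [hT]
      calc (∑ i, (x i * U i ℓ) * (H.mulVec (q ℓ) i))
          ≤ Real.sqrt (∑ i, (x i * U i ℓ) ^ 2)
            * Real.sqrt (∑ i, (H.mulVec (q ℓ) i) ^ 2) := OneBitAux.cs_sum _ _
        _ ≤ _ := mul_le_mul_of_nonneg_left (OneBitAux.norm_mulVec_le H (q ℓ))
            (Real.sqrt_nonneg _)
    have hsum_le : (∑ ℓ, T ℓ) ≤ specNorm H * (Real.sqrt (∑ ℓ, ∑ i, (x i * U i ℓ) ^ 2)
        * Real.sqrt (∑ ℓ, ∑ j, (q ℓ j) ^ 2)) := by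
      calc (∑ ℓ, T ℓ) ≤ ∑ ℓ, Real.sqrt (∑ i, (x i * U i ℓ) ^ 2)
            * (specNorm H * Real.sqrt (∑ j, (q ℓ j) ^ 2)) :=
            Finset.sum_le_sum fun ℓ _ => Pdef ℓ
        _ = specNorm H * ∑ ℓ, Real.sqrt (∑ i, (x i * U i ℓ) ^ 2)
            * Real.sqrt (∑ j, (q ℓ j) ^ 2) := by
            rw [Finset.mul_sum]
            apply Finset.sum_congr rfl; intro ℓ _; ring
        _ ≤ specNorm H * (Real.sqrt (∑ ℓ, ∑ i, (x i * U i ℓ) ^ 2)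
            * Real.sqrt (∑ ℓ, ∑ j, (q ℓ j) ^ 2)) := by
            apply mul_le_mul_of_nonneg_left _ hHnn
            have hcs := OneBitAux.cs_sum (fun ℓ => Real.sqrt (∑ i, (x i * U i ℓ) ^ 2))
              (fun ℓ => Real.sqrt (∑ j, (q ℓ j) ^ 2))
            have hsq1 : (∑ ℓ, (Real.sqrt (∑ i, (x i * U i ℓ) ^ 2)) ^ 2)
                = ∑ ℓ, ∑ i, (x i * U i ℓ) ^ 2 := by
              apply Finset.sum_congr rfl; intro ℓ _
              exact Real.sq_sqrt (Finset.sum_nonneg fun _ _ => sq_nonneg _)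
            have hsq2 : (∑ ℓ, (Real.sqrt (∑ j, (q ℓ j) ^ 2)) ^ 2)
                = ∑ ℓ, ∑ j, (q ℓ j) ^ 2 := by
              apply Finset.sum_congr rfl; intro ℓ _
              exact Real.sq_sqrt (Finset.sum_nonneg fun _ _ => sq_nonneg _)
            rw [hsq1, hsq2] at hcs
            exact hcs
    have hPsum : (∑ ℓ, ∑ i, (x i * U i ℓ) ^ 2) ≤ sU := by
      rw [Finset.sum_comm]
      calc (∑ i, ∑ ℓ, (x i * U i ℓ) ^ 2) = ∑ i, (x i) ^ 2 * ∑ ℓ, (U i ℓ) ^ 2 := by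
            apply Finset.sum_congr rfl; intro i _
            rw [Finset.mul_sum]
            apply Finset.sum_congr rfl; intro ℓ _; ring
        _ ≤ ∑ i, (x i) ^ 2 * sU := Finset.sum_le_sum fun i _ =>
            mul_le_mul_of_nonneg_left (hsU_le i) (sq_nonneg _)
        _ = (∑ i, (x i) ^ 2) * sU := by rw [Finset.sum_mul]
        _ ≤ 1 * sU := mul_le_mul_of_nonneg_right hx hsU0
        _ = sU := one_mul _
    have hQsum : (∑ ℓ, ∑ j, (q ℓ j) ^ 2) ≤ sV := by
      rw [Finset.sum_comm]
      calc (∑ j, ∑ ℓ, (q ℓ j) ^ 2) = ∑ j, (y j) ^ 2 * ∑ ℓ, (V j ℓ) ^ 2 := by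
            apply Finset.sum_congr rfl; intro j _
            rw [Finset.mul_sum]
            apply Finset.sum_congr rfl; intro ℓ _
            simp only [hq]; ring
        _ ≤ ∑ j, (y j) ^ 2 * sV := Finset.sum_le_sum fun j _ =>
            mul_le_mul_of_nonneg_left (hsV_le j) (sq_nonneg _)
        _ = (∑ j, (y j) ^ 2) * sV := by rw [Finset.sum_mul]
        _ ≤ 1 * sV := mul_le_mul_of_nonneg_right hy hsV0
        _ = sV := one_mul _
    have hfinal : Real.sqrt (∑ ℓ, ∑ i, (x i * U i ℓ) ^ 2)
        * Real.sqrt (∑ ℓ, ∑ j, (q ℓ j) ^ 2) ≤ c := by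
      calc Real.sqrt (∑ ℓ, ∑ i, (x i * U i ℓ) ^ 2)
          * Real.sqrt (∑ ℓ, ∑ j, (q ℓ j) ^ 2)
          ≤ Real.sqrt c * Real.sqrt c := by
            apply mul_le_mul
            · exact Real.sqrt_le_sqrt (le_trans hPsum (le_max_left _ _))
            · exact Real.sqrt_le_sqrt (le_trans hQsum (le_max_right _ _))
            · exact Real.sqrt_nonneg _
            · exact Real.sqrt_nonneg _
        _ = c := Real.mul_self_sqrt hc0
    rw [E]
    have hstep : (∑ ℓ, T ℓ) ≤ specNorm H * c :=
      le_trans hsum_le (mul_le_mul_of_nonneg_left hfinal hHnn)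
    calc κ0 * ∑ ℓ, T ℓ ≤ κ0 * (specNorm H * c) :=
        mul_le_mul_of_nonneg_left hstep hκ0pos.le
      _ = κ0 * specNorm H * c := by ring
  have hbound : specNorm Δ ≤ κ0 * specNorm H * maxNorm Z := by
    by_cases hκH : κ0 * specNorm H = 0
    · obtain ⟨c0, hc0⟩ := hSne
      have h1 := main c0 hc0
      rw [hκH, zero_mul] at h1
      rw [hκH, zero_mul]
      exact h1
    · have hκHpos : 0 < κ0 * specNorm H :=
        lt_of_le_of_ne (mul_nonneg hκ0pos.le hHnn) (Ne.symm hκH)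
      have h1 : specNorm Δ / (κ0 * specNorm H) ≤ sInf S := by
        apply le_csInf hSne
        intro c hc
        rw [div_le_iff₀ hκHpos]
        calc specNorm Δ ≤ κ0 * specNorm H * c := main c hc
          _ = c * (κ0 * specNorm H) := by ring
      rw [hmaxS]
      calc specNorm Δ = specNorm Δ / (κ0 * specNorm H) * (κ0 * specNorm H) := by
            rw [div_mul_cancel₀ _ hκH]
        _ ≤ sInf S * (κ0 * specNorm H) := mul_le_mul_of_nonneg_right h1 hκHpos.le
        _ = κ0 * specNorm H * sInf S := by ring
  calc specNorm Δ ≤ κ0 * specNorm H * maxNorm Z := hbound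
    _ ≤ κ0 * sigma2 G * maxNorm Z := by
        apply mul_le_mul_of_nonneg_right _ hM0
        exact mul_le_mul_of_nonneg_left hHσ2 hκ0pos.le
    _ = Real.sqrt ((m:ℝ) * n) * sigma2 G / σ * maxNorm Z := by
        rw [hκ0]; ring
end
end

section
/- (Probit model constant L_α.) Let σ > 0, α > 0, and f(x) = Φ(x/σ) where Φ is the standard normal cumulative distribution function. Then sup_{|x|≤α} f'(x)/(f(x)(1−f(x))) ≤ (4/σ)·(α/σ + 1), i.e., L_α ≤ (4/σ)(α/σ + 1). -/
open MeasureTheory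

namespace OneBitMCProbit

noncomputable def G (t : ℝ) : ℝ := Real.exp (-t ^ 2 / 2) / Real.sqrt (2 * Real.pi)

lemma sqrt2pi_pos : 0 < Real.sqrt (2 * Real.pi) := Real.sqrt_pos.2 (by positivity)

lemma G_pos (t : ℝ) : 0 < G t := div_pos (Real.exp_pos _) sqrt2pi_pos

lemma G_eq : G = fun t => Real.exp (-(1/2 : ℝ) * t ^ 2) / Real.sqrt (2 * Real.pi) := by
  funext t; unfold G; congr 2; ring

lemma G_neg (t : ℝ) : G (-t) = G t := by unfold G; congr 3; ring

lemma G_continuous : Continuous G := by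
  unfold G; fun_prop

lemma G_integrable : Integrable G := by
  rw [G_eq]
  exact (integrable_exp_neg_mul_sq (by norm_num : (0:ℝ) < 1/2)).div_const _

lemma G_total : ∫ t, G t = 1 := by
  rw [G_eq, integral_div, integral_gaussian,
    show Real.pi / (1/2) = 2 * Real.pi by ring, div_self sqrt2pi_pos.ne']

lemma G_le_one (t : ℝ) : G t ≤ 1 := by
  unfold G
  rw [div_le_one sqrt2pi_pos]
  have h1 : Real.exp (-t ^ 2 / 2) ≤ 1 := Real.exp_le_one_iff.2 (by nlinarith [sq_nonneg t])
  have h2 : (1:ℝ) ≤ Real.sqrt (2 * Real.pi) := by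
    rw [show (1:ℝ) = Real.sqrt 1 from (Real.sqrt_one).symm]
    exact Real.sqrt_le_sqrt (by nlinarith [Real.pi_gt_three])
  linarith

lemma hasDerivAt_Phi (x : ℝ) :
    HasDerivAt (fun u => ∫ t in Set.Iic u, G t) (G x) x := by
  have key : (fun u => ∫ t in Set.Iic u, G t)
      = fun u => (∫ t in Set.Iic (0:ℝ), G t) + ∫ t in (0:ℝ)..u, G t := by
    funext u
    rw [← intervalIntegral.integral_Iic_sub_Iic G_integrable.integrableOn G_integrable.integrableOn]
    ring
  rw [key]
  refine HasDerivAt.const_add _ ?_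
  exact (intervalIntegral.integral_hasStrictDerivAt_right
    G_integrable.intervalIntegrable
    G_continuous.stronglyMeasurable.stronglyMeasurableAtFilter
    G_continuous.continuousAt).hasDerivAt

lemma Phi_add_tail (z : ℝ) : (∫ t in Set.Iic z, G t) + ∫ t in Set.Ioi z, G t = 1 := by
  rw [intervalIntegral.integral_Iic_add_Ioi G_integrable.integrableOn G_integrable.integrableOn, G_total]

lemma Phi_neg (z : ℝ) : (∫ t in Set.Iic (-z), G t) = ∫ t in Set.Ioi z, G t := by
  have h := integral_comp_neg_Iic (-z) G
  rw [neg_neg] at h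
  rw [← h]
  congr 1
  funext t
  exact (G_neg t).symm

lemma interval_le_tail {z b : ℝ} (hzb : z ≤ b) :
    (∫ t in z..b, G t) ≤ ∫ t in Set.Ioi z, G t := by
  rw [intervalIntegral.integral_of_le hzb]
  refine setIntegral_mono_set G_integrable.integrableOn ?_ ?_
  · exact Filter.Eventually.of_forall fun t => (G_pos t).le
  · exact Filter.Eventually.of_forall (fun t ht => ht.1)

lemma tail_lb {z : ℝ} (hz : 0 ≤ z) : G z / (z + 1) ≤ ∫ t in Set.Ioi z, G t := by
  set g : ℝ → ℝ := fun t => G t / (t + 1) with hg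
  have hGderiv : ∀ t : ℝ, HasDerivAt G (-t * G t) t := by
    intro t
    have h1 : HasDerivAt (fun t : ℝ => -t ^ 2 / 2) (-t) t := by
      have := ((hasDerivAt_pow 2 t).neg).div_const 2
      simpa using this.congr_deriv (by ring)
    have h2 : HasDerivAt (fun t : ℝ => Real.exp (-t ^ 2 / 2)) (Real.exp (-t ^ 2 / 2) * (-t)) t :=
      (Real.hasDerivAt_exp _).comp t h1
    have h3 := h2.div_const (Real.sqrt (2 * Real.pi))
    unfold G
    refine h3.congr_deriv ?_
    ring
  have hgderiv : ∀ t : ℝ, t ≠ -1 →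
      HasDerivAt (fun u => -g u) (G t * (t^2 + t + 1) / (t + 1)^2) t := by
    intro t ht
    have hne : t + 1 ≠ 0 := by intro h; exact ht (by linarith)
    have hd : HasDerivAt (fun u : ℝ => u + 1) 1 t := (hasDerivAt_id t).add_const 1
    have := ((hGderiv t).div hd hne).neg
    convert this using 1
    · rfl
    · rfl
    · rfl
    field_simp
    ring
  have key : ∀ b, z ≤ b → g z - g b ≤ ∫ t in Set.Ioi z, G t := by
    intro b hb
    have hsub : Set.uIcc z b ⊆ Set.Ici (0:ℝ) := by
      rw [Set.uIcc_of_le hb]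
      exact fun t ht => le_trans hz ht.1
    have hcont : ContinuousOn (fun t => G t * (t^2 + t + 1) / (t + 1)^2) (Set.uIcc z b) := by
      apply ContinuousOn.div
      · exact (G_continuous.mul (by continuity)).continuousOn
      · exact (by continuity : Continuous fun t : ℝ => (t+1)^2).continuousOn
      · intro t ht
        have : (0:ℝ) ≤ t := hsub ht
        positivity
    have h1 : (∫ t in z..b, G t * (t^2 + t + 1) / (t + 1)^2) = g z - g b := by
      rw [intervalIntegral.integral_eq_sub_of_hasDerivAt
        (f := fun u => -g u) (fun t ht => hgderiv t (by
          have : (0:ℝ) ≤ t := hsub ht; intro h; linarith))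
        (hcont.intervalIntegrable)]
      ring
    have h2 : (∫ t in z..b, G t * (t^2 + t + 1) / (t + 1)^2) ≤ ∫ t in z..b, G t := by
      apply intervalIntegral.integral_mono_on hb
      · exact hcont.intervalIntegrable
      · exact G_continuous.intervalIntegrable _ _
      · intro t ht
        have ht0 : (0:ℝ) ≤ t := le_trans hz ht.1
        rw [div_le_iff₀ (by positivity)]
        have : t^2 + t + 1 ≤ (t + 1)^2 := by nlinarith
        nlinarith [G_pos t]
    have h3 := interval_le_tail hb
    linarith
  -- now take b → ∞
  have hgb0 : Filter.Tendsto g Filter.atTop (nhds 0) := by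
    have hub : Filter.Tendsto (fun b : ℝ => (b + 1)⁻¹) Filter.atTop (nhds 0) :=
      tendsto_inv_atTop_zero.comp (Filter.tendsto_atTop_add_const_right _ (1:ℝ)
        Filter.tendsto_id)
    refine squeeze_zero' ?_ ?_ hub
    · filter_upwards [Filter.eventually_ge_atTop (0:ℝ)] with b hb
      exact le_of_lt (div_pos (G_pos b) (by linarith))
    · filter_upwards [Filter.eventually_ge_atTop (0:ℝ)] with b hb
      have hb1 : (0:ℝ) < b + 1 := by linarith
      rw [← one_div]
      exact div_le_div₀ zero_le_one (G_le_one b) hb1 le_rfl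
  have hlim : Filter.Tendsto (fun b => g z - g b) Filter.atTop (nhds (g z)) := by
    simpa using (tendsto_const_nhds (x := g z)).sub hgb0
  have : g z ≤ ∫ t in Set.Ioi z, G t := by
    refine le_of_tendsto hlim ?_
    filter_upwards [Filter.eventually_ge_atTop z] with b hb using key b hb
  exact this

end OneBitMCProbit

open OneBitMCProbit in
/-- Probit model constant L_α: for the probit link f(x) = Φ(x/σ) with Φ
the standard normal CDF, sup_{|x|≤α} f'(x)/(f(x)(1−f(x))) ≤ (4/σ)(α/σ + 1). -/
theorem one_bit_mc_probit_L_alpha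
    (σ α : ℝ) (hσ : 0 < σ) (hα : 0 < α)
    (Φ f : ℝ → ℝ)
    (hΦ : ∀ x, Φ x = ∫ t in Set.Iic x, Real.exp (-t ^ 2 / 2) / Real.sqrt (2 * Real.pi))
    (hf : ∀ x, f x = Φ (x / σ)) :
    ∀ x : ℝ, |x| ≤ α →
      deriv f x / (f x * (1 - f x)) ≤ 4 / σ * (α / σ + 1) := by
  have hΦ0 : ∀ u, Φ u = ∫ t in Set.Iic u, G t := hΦ
  intro x hx
  set z := x / σ with hz
  have hfeq : f = fun y => ∫ t in Set.Iic (y / σ), G t := by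
    funext y; rw [hf, hΦ0]
  -- derivative
  have hderiv : HasDerivAt f (G z / σ) x := by
    have h1 : HasDerivAt (fun y : ℝ => y / σ) (1 / σ) x := by
      simpa using (hasDerivAt_id x).div_const σ
    have h2 := (hasDerivAt_Phi z).comp x h1
    rw [hfeq]
    refine h2.congr_deriv ?_
    rw [mul_one_div]
  have hd : deriv f x = G z / σ := hderiv.deriv
  -- f x and 1 - f x
  have hfx : f x = ∫ t in Set.Iic z, G t := by rw [hf, hΦ0]
  have htail : 1 - f x = ∫ t in Set.Ioi z, G t := by
    rw [hfx]; have := Phi_add_tail z; linarith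
  have hhalf : (∫ t in Set.Iic (0:ℝ), G t) = 1/2 := by
    have h1 := Phi_add_tail 0
    have h2 := Phi_neg 0
    rw [neg_zero] at h2
    linarith
  have hhalf' : (∫ t in Set.Ioi (0:ℝ), G t) = 1/2 := by
    have h1 := Phi_add_tail 0; linarith
  -- product lower bound
  have hprod : G z / (2 * (|z| + 1)) ≤ f x * (1 - f x) ∧ 0 < f x ∧ 0 < 1 - f x := by
    rcases le_or_gt 0 z with hzpos | hzneg
    · have hA : (1:ℝ)/2 ≤ f x := by
        rw [hfx]
        have hsub := intervalIntegral.integral_Iic_sub_Iic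
          (a := (0:ℝ)) (b := z) (μ := volume)
          G_integrable.integrableOn G_integrable.integrableOn
        have hnn : 0 ≤ ∫ t in (0:ℝ)..z, G t :=
          intervalIntegral.integral_nonneg hzpos (fun t _ => (G_pos t).le)
        linarith [hhalf ▸ hsub]
      have hB : G z / (z + 1) ≤ 1 - f x := htail ▸ tail_lb hzpos
      have hBpos : 0 < G z / (z + 1) := div_pos (G_pos z) (by linarith)
      refine ⟨?_, by linarith, by linarith⟩
      have := mul_le_mul hA hB hBpos.le (by linarith : (0:ℝ) ≤ f x)
      calc G z / (2 * (|z| + 1)) = 1/2 * (G z / (z + 1)) := by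
            rw [abs_of_nonneg hzpos]; field_simp
        _ ≤ f x * (1 - f x) := this
    · have hA : G z / (-z + 1) ≤ f x := by
        rw [hfx]
        have h2 := Phi_neg (-z)
        rw [neg_neg] at h2
        have h3 := tail_lb (by linarith : (0:ℝ) ≤ -z)
        rw [G_neg z] at h3
        exact h2 ▸ h3
      have hB : (1:ℝ)/2 ≤ 1 - f x := by
        rw [htail, ← hhalf']
        refine setIntegral_mono_set G_integrable.integrableOn
          (Filter.Eventually.of_forall fun t => (G_pos t).le)
          (Filter.Eventually.of_forall fun t ht => ?_)
        exact lt_trans hzneg ht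
      have hApos : 0 < G z / (-z + 1) := div_pos (G_pos z) (by linarith)
      refine ⟨?_, by linarith, by linarith⟩
      have hmul := mul_le_mul hA hB (by norm_num) (le_trans hApos.le hA)
      calc G z / (2 * (|z| + 1)) = (G z / (-z + 1)) * (1/2) := by
            rw [abs_of_neg hzneg]; field_simp
        _ ≤ f x * (1 - f x) := hmul
  obtain ⟨hprodD, hfpos, h1fpos⟩ := hprod
  have hD : 0 < G z / (2 * (|z| + 1)) := div_pos (G_pos z) (by positivity)
  have hzα : |z| ≤ α / σ := by
    rw [hz, abs_div, abs_of_pos hσ]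
    gcongr
  calc deriv f x / (f x * (1 - f x))
      ≤ (G z / σ) / (G z / (2 * (|z| + 1))) := by
        rw [hd]
        exact div_le_div_of_nonneg_left (div_nonneg (G_pos z).le hσ.le) hD hprodD
    _ = 2 * (|z| + 1) / σ := by
        have h1 : G z ≠ 0 := (G_pos z).ne'
        have h2 : |z| + 1 ≠ 0 := by positivity
        field_simp
    _ ≤ 4 / σ * (α / σ + 1) := by
        rw [div_mul_eq_mul_div]
        apply div_le_div_of_nonneg_right ?_ hσ.le
        nlinarith [div_pos hα hσ]
end

section
/- (Probit model constant γ_α.) Let σ > 0, α > 0, and f(x) = Φ(x/σ) where Φ is the standard normal cumulative distribution function. Then min( inf_{|x|≤α}{ f'(x)²/f(x)² − f''(x)/f(x) }, inf_{|x|≤α}{ f'(x)²/(1−f(x))² + f''(x)/(1−f(x)) } ) ≥ (α/(√(2π)·σ³))·exp(−α²/(2σ²)) > 0. -/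
open MeasureTheory Set Filter Real Topology

noncomputable def Gd (t : ℝ) : ℝ := Real.exp (-t^2/2) / Real.sqrt (2*Real.pi)
noncomputable def Nd (x : ℝ) : ℝ := ∫ t in Set.Iic x, Gd t
noncomputable def Wd (t : ℝ) : ℝ := Gd t^2 - t * Gd t * Nd (-t) - Gd 1 * Nd (-t)^2

lemma Gd_pos (t : ℝ) : 0 < Gd t := by apply div_pos (Real.exp_pos _); positivity
lemma Gd_even (t : ℝ) : Gd (-t) = Gd t := by simp [Gd, neg_pow]
lemma Gd_eq (t : ℝ) : Gd t = Real.exp (-(1/2) * t^2) / Real.sqrt (2*Real.pi) := by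
  simp [Gd]; ring_nf
lemma integrable_Gd : Integrable Gd := by
  simp_rw [funext Gd_eq]
  exact (integrable_exp_neg_mul_sq (by norm_num : (0:ℝ) < 1/2)).div_const _
lemma integral_Gd : ∫ t, Gd t = 1 := by
  have h := integral_gaussian (1/2 : ℝ)
  simp_rw [funext Gd_eq]
  rw [integral_div, h, div_eq_one_iff_eq (by positivity),
    show Real.pi / (1/2) = 2 * Real.pi by ring]
lemma continuous_Gd : Continuous Gd := by unfold Gd; fun_prop

lemma Gd_anti {s t : ℝ} (h0 : 0 ≤ s) (hst : s ≤ t) : Gd t ≤ Gd s := by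
  unfold Gd
  have h : t^2 ≥ s^2 := by nlinarith
  apply div_le_div_of_nonneg_right ?_ (by positivity)
  exact Real.exp_le_exp.mpr (by linarith)

lemma Gd_le_c (t : ℝ) : Gd t ≤ Gd 0 := by
  rcases le_total 0 t with h | h
  · exact Gd_anti le_rfl h
  · rw [← Gd_even]; exact Gd_anti le_rfl (by linarith)

lemma Nd_compl (x : ℝ) : Nd x + (∫ t in Set.Ioi x, Gd t) = 1 := by
  rw [Nd, ← integral_Gd, ← integral_add_compl measurableSet_Iic integrable_Gd, compl_Iic]

lemma Nd_neg_eq (x : ℝ) : Nd (-x) = 1 - Nd x := by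
  have h1 : Nd (-x) = ∫ t in Set.Ioi x, Gd t := by
    have : Nd (-x) = ∫ t in Set.Iic (-x), Gd (-t) := by simp_rw [Gd_even]; rfl
    rw [this, integral_comp_neg_Iic, neg_neg]
  have := Nd_compl x
  linarith

lemma Nd_sub (x y : ℝ) : Nd y - Nd x = ∫ t in x..y, Gd t :=
  intervalIntegral.integral_Iic_sub_Iic integrable_Gd.integrableOn integrable_Gd.integrableOn

lemma Nd_strictMono {x y : ℝ} (h : x < y) : Nd x < Nd y := by
  have h2 : 0 < ∫ t in x..y, Gd t :=
    intervalIntegral.intervalIntegral_pos_of_pos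
      integrable_Gd.intervalIntegrable (fun t => Gd_pos t) h
  have := Nd_sub x y; linarith

lemma Nd_nonneg (x : ℝ) : 0 ≤ Nd x := setIntegral_nonneg measurableSet_Iic fun t _ => (Gd_pos t).le

lemma Nd_pos (x : ℝ) : 0 < Nd x := lt_of_le_of_lt (Nd_nonneg (x-1)) (Nd_strictMono (by linarith))

lemma Nd_lt_one (x : ℝ) : Nd x < 1 := by
  have := Nd_pos (-x); have := Nd_neg_eq x; linarith

lemma Nd_zero : Nd 0 = 1/2 := by have := Nd_neg_eq 0; rw [neg_zero] at this; linarith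

lemma hasDerivAt_Gd (t : ℝ) : HasDerivAt Gd (-t * Gd t) t := by
  have h1 : HasDerivAt (fun t : ℝ => -t^2/2) (-t) t := by
    have := ((hasDerivAt_pow 2 t).neg).div_const 2
    simpa using this.congr_deriv (by ring)
  have := (h1.exp).div_const (Real.sqrt (2*Real.pi))
  exact this.congr_deriv (by unfold Gd; ring)

lemma hasDerivAt_Nd (x : ℝ) : HasDerivAt Nd (Gd x) x := by
  have key : HasDerivAt (fun y => ∫ t in (0:ℝ)..y, Gd t) (Gd x) x :=
    intervalIntegral.integral_hasDerivAt_right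
      (integrable_Gd.intervalIntegrable)
      (integrable_Gd.aestronglyMeasurable.stronglyMeasurableAtFilter)
      continuous_Gd.continuousAt
  have : Nd = fun y => Nd 0 + ∫ t in (0:ℝ)..y, Gd t := by
    funext y; rw [← Nd_sub]; ring
  rw [this]
  simpa using key.const_add (Nd 0)

lemma Nd_upper {u : ℝ} (hu : 0 ≤ u) : Nd u ≤ 1/2 + u * Gd 0 := by
  have h : Nd u - Nd 0 = ∫ t in (0:ℝ)..u, Gd t := Nd_sub 0 u
  have hb : (∫ t in (0:ℝ)..u, Gd t) ≤ ∫ _t in (0:ℝ)..u, Gd 0 :=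
    intervalIntegral.integral_mono_on hu integrable_Gd.intervalIntegrable
      (intervalIntegrable_const) (fun t _ => Gd_le_c t)
  rw [intervalIntegral.integral_const, smul_eq_mul] at hb
  rw [Nd_zero] at h; nlinarith [hb]

lemma Nd_lower {u : ℝ} (hu : 0 ≤ u) : 1/2 + u * Gd u ≤ Nd u := by
  have h : Nd u - Nd 0 = ∫ t in (0:ℝ)..u, Gd t := Nd_sub 0 u
  have hb : (∫ _t in (0:ℝ)..u, Gd u) ≤ ∫ t in (0:ℝ)..u, Gd t :=
    intervalIntegral.integral_mono_on hu intervalIntegrable_const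
      integrable_Gd.intervalIntegrable (fun t ht => Gd_anti ht.1 ht.2)
  rw [intervalIntegral.integral_const, smul_eq_mul] at hb
  rw [Nd_zero] at h; nlinarith [hb]

lemma tendsto_negsq : Tendsto (fun t : ℝ => -t^2/2) atBot atBot := by
  apply Tendsto.atBot_div_const (by norm_num : (0:ℝ) < 2)
  apply tendsto_neg_atTop_atBot.comp
  have h : Tendsto (fun t : ℝ => |t|^2) atBot atTop :=
    (tendsto_pow_atTop (two_ne_zero)).comp tendsto_abs_atBot_atTop
  simpa [sq_abs] using h

lemma tendsto_Gd_atBot : Tendsto Gd atBot (𝓝 0) := by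
  have h : Tendsto (fun t : ℝ => Real.exp (-t^2/2)) atBot (𝓝 0) :=
    Real.tendsto_exp_atBot.comp tendsto_negsq
  have h2 := h.div_const (Real.sqrt (2*Real.pi))
  rw [zero_div] at h2
  exact h2.congr (fun t => rfl)

lemma tendsto_Gd_atTop : Tendsto Gd atTop (𝓝 0) := by
  have h : Tendsto (fun t : ℝ => Gd (-t)) atBot (𝓝 0) := by
    simpa [Gd_even] using tendsto_Gd_atBot
  have := h.comp (tendsto_neg_atTop_atBot (G := ℝ))
  exact this.congr (fun t => by simp)

lemma integrable_mul_Gd : Integrable (fun s : ℝ => -s * Gd s) := by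
  have h := integrable_mul_exp_neg_mul_sq (by norm_num : (0:ℝ) < 1/2)
  have h2 := (h.div_const (Real.sqrt (2*Real.pi))).neg
  apply h2.congr
  filter_upwards with s
  show -(s * Real.exp (-(1/2) * s^2) / Real.sqrt (2*Real.pi)) = -s * Gd s
  simp only [Gd]
  ring_nf

lemma integral_neg_mul_Gd (x : ℝ) : (∫ s in Set.Iic x, -s * Gd s) = Gd x := by
  have h := integral_Iic_of_hasDerivAt_of_tendsto' (a := x) (f := Gd)
    (f' := fun s => -s * Gd s)
    (fun s _ => hasDerivAt_Gd s) integrable_mul_Gd.integrableOn tendsto_Gd_atBot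
  rw [h, sub_zero]

lemma mills {t : ℝ} (ht : 0 < t) : Nd (-t) ≤ Gd t / t := by
  have key : Nd (-t) ≤ ∫ s in Set.Iic (-t), (-s/t) * Gd s := by
    apply setIntegral_mono_on integrable_Gd.integrableOn
      ((integrable_mul_Gd.div_const t).congr (by filter_upwards with s; ring)).integrableOn
      measurableSet_Iic
    intro s hs
    simp only [Set.mem_Iic] at hs
    have h1 : 1 ≤ -s/t := (le_div_iff₀ ht).2 (by linarith)
    nlinarith [Gd_pos s]
  have h2 : (∫ s in Set.Iic (-t), (-s/t) * Gd s) = (∫ s in Set.Iic (-t), -s * Gd s) / t := by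
    rw [← integral_div]; congr 1; funext s; ring
  rw [h2, integral_neg_mul_Gd, Gd_even] at key
  exact key

lemma hasDerivAt_NdNeg (t : ℝ) : HasDerivAt (fun s => Nd (-s)) (-Gd t) t := by
  have h := (hasDerivAt_Nd (-t)).comp t (hasDerivAt_neg t)
  simpa [Gd_even, Function.comp_def] using h

lemma hasDerivAt_Wd (t : ℝ) :
    HasDerivAt Wd (Gd t * ((t^2 - 1 + 2 * Gd 1) * Nd (-t) - t * Gd t)) t := by
  have hG := hasDerivAt_Gd t
  have hN := hasDerivAt_NdNeg t
  have h1 : HasDerivAt (fun s => Gd s^2) (2 * Gd t * (-t * Gd t)) t := by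
    exact (hG.pow 2).congr_deriv (by ring)
  have h2 : HasDerivAt (fun s => s * Gd s * Nd (-s))
      ((1 * Gd t + t * (-t * Gd t)) * Nd (-t) + t * Gd t * (-Gd t)) t :=
    ((hasDerivAt_id t).mul hG).mul hN
  have h3 : HasDerivAt (fun s => Gd 1 * Nd (-s)^2) (Gd 1 * (2 * Nd (-t) * (-Gd t))) t := by
    exact (hN.pow 2).const_mul (Gd 1) |>.congr_deriv (by ring)
  have := (h1.sub h2).sub h3
  exact this.congr_deriv (by ring)

lemma c_lt_half : Gd 0 < 1/2 := by
  have h2 : (2:ℝ) < Real.sqrt (2*Real.pi) := by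
    have : (2:ℝ) = Real.sqrt 4 := by
      rw [show (4:ℝ) = 2^2 by norm_num, Real.sqrt_sq (by norm_num)]
    rw [this]
    apply Real.sqrt_lt_sqrt (by norm_num)
    nlinarith [Real.pi_gt_three]
  have : Gd 0 = 1 / Real.sqrt (2*Real.pi) := by simp [Gd]
  rw [this]
  rw [div_lt_div_iff₀ (by positivity) (by norm_num)]
  linarith

lemma deriv_Wd_nonpos {t : ℝ} (ht : 0 < t) : deriv Wd t ≤ 0 := by
  rw [(hasDerivAt_Wd t).deriv]
  have hG := Gd_pos t
  have hN := Nd_nonneg (-t)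
  have hq : Gd 1 < 1/2 := lt_of_le_of_lt (Gd_le_c 1) c_lt_half
  rcases le_or_gt (t^2 - 1 + 2 * Gd 1) 0 with h | h
  · have h0 : (t^2 - 1 + 2 * Gd 1) * Nd (-t) ≤ 0 := mul_nonpos_of_nonpos_of_nonneg h hN
    apply mul_nonpos_of_nonneg_of_nonpos hG.le
    nlinarith [mul_pos ht hG]
  · have hm : Nd (-t) ≤ Gd t / t := mills ht
    have h1 : (t^2 - 1 + 2 * Gd 1) * Nd (-t) ≤ (t^2 - 1 + 2 * Gd 1) * (Gd t / t) := by
      apply mul_le_mul_of_nonneg_left hm h.le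
    have h2 : (t^2 - 1 + 2 * Gd 1) * (Gd t / t) - t * Gd t ≤ 0 := by
      rw [div_eq_mul_inv]
      have : (t^2 - 1 + 2 * Gd 1) * (Gd t * t⁻¹) - t * Gd t
          = (Gd t * t⁻¹) * (2 * Gd 1 - 1) := by
        field_simp; ring
      rw [this]
      apply mul_nonpos_of_nonneg_of_nonpos (by positivity) (by linarith)
    nlinarith

lemma tendsto_tGd_atTop : Tendsto (fun t : ℝ => t * Gd t) atTop (𝓝 0) := by
  have hs : (0:ℝ) < Real.sqrt (2*Real.pi) := by positivity
  apply squeeze_zero' (g := fun t => 2 / Real.sqrt (2*Real.pi) * t⁻¹)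
  · filter_upwards [eventually_ge_atTop (0:ℝ)] with t ht
    exact mul_nonneg ht (Gd_pos t).le
  · filter_upwards [eventually_gt_atTop (0:ℝ)] with t ht
    have he : t^2/2 ≤ Real.exp (t^2/2) := by nlinarith [Real.add_one_le_exp (t^2/2)]
    have h1 : Real.exp (-t^2/2) ≤ 2/t^2 := by
      rw [show -t^2/2 = -(t^2/2) by ring, Real.exp_neg]
      calc (Real.exp (t^2/2))⁻¹ ≤ (t^2/2)⁻¹ := by
            apply inv_anti₀ (by positivity) he
        _ = 2/t^2 := by field_simp
    have h2 : t * Real.exp (-t^2/2) ≤ 2 * t⁻¹ := by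
      calc t * Real.exp (-t^2/2) ≤ t * (2/t^2) := by
            apply mul_le_mul_of_nonneg_left h1 ht.le
        _ = 2 * t⁻¹ := by field_simp
    show t * Gd t ≤ 2 / Real.sqrt (2*Real.pi) * t⁻¹
    unfold Gd
    rw [show t * (Real.exp (-t^2/2) / Real.sqrt (2*Real.pi))
        = t * Real.exp (-t^2/2) / Real.sqrt (2*Real.pi) by ring,
      show (2:ℝ) / Real.sqrt (2*Real.pi) * t⁻¹
        = 2 * t⁻¹ / Real.sqrt (2*Real.pi) by ring]
    exact div_le_div_of_nonneg_right h2 hs.le |>.trans_eq rfl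
  · have h := (tendsto_inv_atTop_zero : Tendsto (fun t:ℝ => t⁻¹) atTop (𝓝 0))
    simpa using h.const_mul (2 / Real.sqrt (2*Real.pi))

lemma tendsto_NdNeg_atTop : Tendsto (fun t : ℝ => Nd (-t)) atTop (𝓝 0) := by
  apply squeeze_zero' (g := Gd)
  · filter_upwards with t; exact (Nd_pos (-t)).le
  · filter_upwards [eventually_ge_atTop (1:ℝ)] with t ht
    calc Nd (-t) ≤ Gd t / t := mills (by linarith)
      _ ≤ Gd t := by
          rw [div_le_iff₀ (by linarith)]
          nlinarith [Gd_pos t]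
  · exact tendsto_Gd_atTop

lemma tendsto_Wd_atTop : Tendsto Wd atTop (𝓝 0) := by
  have h1 : Tendsto (fun t : ℝ => Gd t^2) atTop (𝓝 0) := by
    simpa using (tendsto_Gd_atTop.pow 2)
  have h2 : Tendsto (fun t : ℝ => t * Gd t * Nd (-t)) atTop (𝓝 0) := by
    simpa using tendsto_tGd_atTop.mul tendsto_NdNeg_atTop
  have h3 : Tendsto (fun t : ℝ => Gd 1 * Nd (-t)^2) atTop (𝓝 0) := by
    simpa using (tendsto_NdNeg_atTop.pow 2).const_mul (Gd 1)
  have := (h1.sub h2).sub h3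
  have e : Wd = fun t => Gd t^2 - t * Gd t * Nd (-t) - Gd 1 * Nd (-t)^2 := rfl
  rw [e]; simpa using this

lemma Wd_antitoneOn : AntitoneOn Wd (Set.Ici 0) := by
  apply antitoneOn_of_deriv_nonpos (convex_Ici 0)
  · exact fun t _ => ((hasDerivAt_Wd t).continuousAt).continuousWithinAt
  · intro t _
    exact (hasDerivAt_Wd t).differentiableAt.differentiableWithinAt
  · intro t ht
    rw [interior_Ici] at ht
    exact deriv_Wd_nonpos ht

lemma Wd_nonneg {t : ℝ} (ht : 0 ≤ t) : 0 ≤ Wd t := by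
  apply le_of_tendsto tendsto_Wd_atTop
  filter_upwards [eventually_ge_atTop t] with s hs
  exact Wd_antitoneOn ht (le_trans ht hs) hs

lemma sqrt2pi_nonneg : (0:ℝ) ≤ Real.sqrt (2*Real.pi) := Real.sqrt_nonneg _

lemma aGa_le {a : ℝ} (ha : 0 ≤ a) : a * Gd a ≤ Gd 1 := by
  have h1 : a ≤ Real.exp ((a^2-1)/2) := by
    have := Real.add_one_le_exp ((a^2-1)/2)
    nlinarith [sq_nonneg (a-1)]
  have h2 : a * Real.exp (-a^2/2) ≤ Real.exp (-(1:ℝ)^2/2) := by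
    calc a * Real.exp (-a^2/2) ≤ Real.exp ((a^2-1)/2) * Real.exp (-a^2/2) :=
          mul_le_mul_of_nonneg_right h1 (Real.exp_pos _).le
      _ = Real.exp (-(1:ℝ)^2/2) := by rw [← Real.exp_add]; congr 1; ring
  calc a * Gd a = (a * Real.exp (-a^2/2)) / Real.sqrt (2*Real.pi) := by
        unfold Gd; ring
    _ ≤ Real.exp (-(1:ℝ)^2/2) / Real.sqrt (2*Real.pi) :=
        div_le_div_of_nonneg_right h2 sqrt2pi_nonneg
    _ = Gd 1 := rfl

lemma tGt_anti {u a : ℝ} (hu : 1 ≤ u) (hua : u ≤ a) : a * Gd a ≤ u * Gd u := by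
  have h1 : a ≤ u * Real.exp ((a^2-u^2)/2) := by
    have h := Real.add_one_le_exp ((a^2-u^2)/2)
    nlinarith [mul_le_mul_of_nonneg_left h (show (0:ℝ) ≤ u by linarith),
      mul_nonneg (sub_nonneg.2 hua) (show (0:ℝ) ≤ a+u-2 by linarith),
      mul_nonneg (show (0:ℝ) ≤ u-1 by linarith)
        (show (0:ℝ) ≤ (a^2-u^2)/2 by nlinarith)]
  have h2 : a * Real.exp (-a^2/2) ≤ u * Real.exp (-u^2/2) := by
    calc a * Real.exp (-a^2/2) ≤ u * Real.exp ((a^2-u^2)/2) * Real.exp (-a^2/2) :=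
          mul_le_mul_of_nonneg_right h1 (Real.exp_pos _).le
      _ = u * Real.exp (-u^2/2) := by
          rw [mul_assoc, ← Real.exp_add]; congr 2; ring
  calc a * Gd a = (a * Real.exp (-a^2/2)) / Real.sqrt (2*Real.pi) := by
        unfold Gd; ring
    _ ≤ (u * Real.exp (-u^2/2)) / Real.sqrt (2*Real.pi) :=
        div_le_div_of_nonneg_right h2 sqrt2pi_nonneg
    _ = u * Gd u := by unfold Gd; ring

lemma c_ub : Gd 0 ≤ 2/5 := by
  have h1 : (5:ℝ)/2 ≤ Real.sqrt (2*Real.pi) := by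
    rw [show (5:ℝ)/2 = Real.sqrt ((5/2)^2) by rw [Real.sqrt_sq (by norm_num : (0:ℝ) ≤ 5/2)]]
    apply Real.sqrt_le_sqrt
    nlinarith [Real.pi_gt_d6]
  have h2 : Gd 0 = 1 / Real.sqrt (2*Real.pi) := by simp [Gd]
  rw [h2, div_le_div_iff₀ (by positivity) (by norm_num)]
  linarith

lemma q_lb : (6:ℝ)/25 ≤ Gd 1 := by
  have hs : Real.sqrt (2*Real.pi)^2 = 2*Real.pi :=
    Real.sq_sqrt (by positivity)
  have hsp : (0:ℝ) < Real.sqrt (2*Real.pi) := by positivity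
  set A := Real.exp (-(1:ℝ)^2/2) with hAdef
  have hA : A^2 = (Real.exp 1)⁻¹ := by
    rw [hAdef, sq, ← Real.exp_add, show -(1:ℝ)^2/2 + -(1:ℝ)^2/2 = -1 by ring,
      Real.exp_neg]
  have hA0 : 0 < A := Real.exp_pos _
  have he := Real.exp_one_lt_d9
  have hinv : (0.3678:ℝ) ≤ (Real.exp 1)⁻¹ := by
    have h := Real.exp_pos 1
    nlinarith [mul_inv_cancel₀ (ne_of_gt h)]
  have key : (6:ℝ)/25 * Real.sqrt (2*Real.pi) ≤ A := by
    nlinarith [Real.pi_lt_d6, sq_nonneg (A + 6/25*Real.sqrt (2*Real.pi))]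
  have : Gd 1 = A / Real.sqrt (2*Real.pi) := rfl
  rw [this, le_div_iff₀ hsp]
  linarith

lemma Gd_lower_onI {u : ℝ} (hu1 : u ≤ 1) : Gd 1 * ((3 - u^2)/2) ≤ Gd u := by
  have h1 : (1 - u^2)/2 + 1 ≤ Real.exp ((1-u^2)/2) := Real.add_one_le_exp _
  have h2 : Real.exp (-(1:ℝ)^2/2) * ((3 - u^2)/2) ≤ Real.exp (-u^2/2) := by
    calc Real.exp (-(1:ℝ)^2/2) * ((3 - u^2)/2)
        ≤ Real.exp (-(1:ℝ)^2/2) * Real.exp ((1-u^2)/2) := by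
          apply mul_le_mul_of_nonneg_left ?_ (Real.exp_pos _).le
          linarith
      _ = Real.exp (-u^2/2) := by rw [← Real.exp_add]; congr 1; ring
  calc Gd 1 * ((3 - u^2)/2)
      = (Real.exp (-(1:ℝ)^2/2) * ((3 - u^2)/2)) / Real.sqrt (2*Real.pi) := by
        unfold Gd; ring
    _ ≤ Real.exp (-u^2/2) / Real.sqrt (2*Real.pi) :=
        div_le_div_of_nonneg_right h2 sqrt2pi_nonneg
    _ = Gd u := rfl

set_option maxHeartbeats 1000000 in
lemma core {a u : ℝ} (ha : 0 < a) (hu : |u| ≤ a) :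
    a * Gd a * Nd u^2 ≤ Gd u^2 + u * Gd u * Nd u := by
  have habs := abs_le.1 hu
  have hNu := Nd_pos u
  have hGu := Gd_pos u
  have hq0 : (0:ℝ) < Gd 1 := Gd_pos 1
  rcases le_or_gt u 0 with hneg | hpos
  · -- u ≤ 0 : use Wd at t = -u
    have hW := Wd_nonneg (t := -u) (by linarith)
    unfold Wd at hW
    rw [Gd_even, neg_neg] at hW
    have h1 : a * Gd a * Nd u^2 ≤ Gd 1 * Nd u^2 := by
      apply mul_le_mul_of_nonneg_right (aGa_le ha.le) (by positivity)
    nlinarith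
  · rcases le_or_gt u 1 with hle1 | hgt1
    · -- 0 < u ≤ 1 : polynomial regime
      have hub : Nd u ≤ 1/2 + u * (2/5) := by
        have := Nd_upper hpos.le
        nlinarith [c_ub]
      have hlb : 1/2 + u * Gd u ≤ Nd u := Nd_lower hpos.le
      have hp : Gd 1 * ((3 - u^2)/2) ≤ Gd u := Gd_lower_onI hle1
      have hqub : Gd 1 ≤ 2/5 := le_trans (Gd_le_c 1) c_ub
      have step1 : a * Gd a * Nd u^2 ≤ Gd 1 * (1/2 + u * (2/5))^2 := by
        have h1 : a * Gd a * Nd u^2 ≤ Gd 1 * Nd u^2 :=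
          mul_le_mul_of_nonneg_right (aGa_le ha.le) (by positivity)
        have h2 : Gd 1 * Nd u^2 ≤ Gd 1 * (1/2 + u * (2/5))^2 := by
          apply mul_le_mul_of_nonneg_left ?_ hq0.le
          nlinarith
        linarith
      have step2 : Gd 1 * (1/2 + u * (2/5))^2 ≤ Gd u^2 + u * Gd u * (1/2 + u * Gd u) := by
        set q := Gd 1 with hqdef
        set p := Gd u with hpdef
        have hq24 : (6:ℝ)/25 ≤ q := q_lb
        have hp0 : q * ((3 - u^2)/2) ≤ p := hp
        have hppos : (0:ℝ) < p := hGu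
        have hp0pos : (0:ℝ) < q * ((3 - u^2)/2) := by nlinarith
        have hpoly : (1/2 + u*(2/5))^2 ≤ (6/25)*((3-u^2)^2*(1+u^2))/4 + u*(3-u^2)/4 := by
          nlinarith [sq_nonneg u, mul_nonneg (mul_nonneg hpos.le hpos.le) (sub_nonneg.2 hle1),
            mul_nonneg hpos.le (sub_nonneg.2 hle1), sq_nonneg (u*(1-u)),
            mul_nonneg (mul_nonneg (mul_nonneg hpos.le hpos.le) hpos.le) (sub_nonneg.2 hle1)]
        have h2b : (1/2 + u*(2/5))^2 ≤ q*((3-u^2)^2*(1+u^2))/4 + u*(3-u^2)/4 := by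
          have hnn : (0:ℝ) ≤ (3-u^2)^2*(1+u^2)/4 := by positivity
          nlinarith [mul_le_mul_of_nonneg_right hq24 hnn]
        have h2c : q * (1/2 + u*(2/5))^2 ≤
            (q*((3-u^2)/2))^2 + u*(q*((3-u^2)/2))/2 + u^2*(q*((3-u^2)/2))^2 :=
          calc q * (1/2 + u*(2/5))^2
              ≤ q * (q*((3-u^2)^2*(1+u^2))/4 + u*(3-u^2)/4) :=
                mul_le_mul_of_nonneg_left h2b hq0.le
            _ = (q*((3-u^2)/2))^2 + u*(q*((3-u^2)/2))/2 + u^2*(q*((3-u^2)/2))^2 := by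
                ring
        have h2a : (q*((3-u^2)/2))^2 + u*(q*((3-u^2)/2))/2 + u^2*(q*((3-u^2)/2))^2
            ≤ p^2 + u*p/2 + u^2*p^2 := by
          have hA : (q*((3-u^2)/2))^2 ≤ p^2 := by nlinarith
          have hB : u*(q*((3-u^2)/2)) ≤ u*p := mul_le_mul_of_nonneg_left hp0 hpos.le
          have hC : u^2*(q*((3-u^2)/2))^2 ≤ u^2*p^2 :=
            mul_le_mul_of_nonneg_left hA (sq_nonneg u)
          linarith
        calc q * (1/2 + u*(2/5))^2
            ≤ p^2 + u*p/2 + u^2*p^2 := le_trans h2c h2a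
          _ = p^2 + u * p * (1/2 + u * p) := by ring
      have step3 : Gd u^2 + u * Gd u * (1/2 + u * Gd u) ≤ Gd u^2 + u * Gd u * Nd u := by
        have := mul_le_mul_of_nonneg_left hlb (mul_nonneg hpos.le hGu.le)
        linarith
      linarith
    · -- 1 < u ≤ a
      have hua : u ≤ a := by linarith [habs.2]
      have h1 : a * Gd a ≤ u * Gd u := tGt_anti hgt1.le hua
      have hN1 : Nd u ≤ 1 := (Nd_lt_one u).le
      nlinarith [mul_pos hpos hGu, mul_nonneg (mul_nonneg hpos.le hGu.le) hNu.le]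


theorem main_assembly (σ α : ℝ) (hσ : 0 < σ) (hα : 0 < α) (f : ℝ → ℝ)
    (hfN : f = fun x => Nd (x/σ)) (x : ℝ) (hx : |x| ≤ α) :
    α / (Real.sqrt (2 * Real.pi) * σ ^ 3) * Real.exp (-α ^ 2 / (2 * σ ^ 2)) ≤
      (deriv f x) ^ 2 / (f x) ^ 2 - deriv (deriv f) x / f x ∧
    α / (Real.sqrt (2 * Real.pi) * σ ^ 3) * Real.exp (-α ^ 2 / (2 * σ ^ 2)) ≤
      (deriv f x) ^ 2 / (1 - f x) ^ 2 + deriv (deriv f) x / (1 - f x) := by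
  have hσ' : σ ≠ 0 := ne_of_gt hσ
  have hd1 : deriv f = fun y => Gd (y/σ) * (1/σ) := by
    rw [hfN]; funext y
    exact (((hasDerivAt_Nd (y/σ)).comp y ((hasDerivAt_id y).div_const σ)).congr_deriv
      (by simp : _ = Gd (y/σ) * (1/σ))).deriv
  have hd2 : deriv (deriv f) = fun y => (-(y/σ) * Gd (y/σ)) * (1/σ) * (1/σ) := by
    rw [hd1]; funext y
    exact ((((hasDerivAt_Gd (y/σ)).comp y ((hasDerivAt_id y).div_const σ)).mul_const
      (1/σ)).congr_deriv (by simp)).deriv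
  set a := α/σ with hadef
  set u := x/σ with hudef
  have ha : 0 < a := div_pos hα hσ
  have hu : |u| ≤ a := by
    rw [hudef, hadef, abs_div, abs_of_pos hσ]
    exact div_le_div_of_nonneg_right hx hσ.le |>.trans_eq rfl
  have hRHS : α / (Real.sqrt (2 * Real.pi) * σ ^ 3) * Real.exp (-α ^ 2 / (2 * σ ^ 2))
      = a * Gd a / σ^2 := by
    rw [hadef]
    unfold Gd
    rw [show -(α/σ)^2/2 = -α^2/(2*σ^2) by field_simp]
    field_simp
  have key1 := core ha hu
  have key2 := core ha (by rwa [abs_neg] : |(-u)| ≤ a)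
  rw [Gd_even] at key2
  have hN : 0 < Nd u := Nd_pos u
  have hM : 0 < Nd (-u) := Nd_pos (-u)
  have hG : 0 < Gd u := Gd_pos u
  have h1mf : 1 - f x = Nd (-u) := by
    rw [hfN]
    simp only [← hudef]
    rw [Nd_neg_eq]
  have hfx : f x = Nd u := by rw [hfN]
  have hσ2 : (0:ℝ) < σ^2 := by positivity
  constructor
  · rw [hRHS, hd2, hd1, hfx]
    have step : a * Gd a / σ^2 ≤ (Gd u^2 + u * Gd u * Nd u)/(Nd u^2 * σ^2) := by
      rw [div_le_div_iff₀ hσ2 (by positivity)]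
      nlinarith [mul_le_mul_of_nonneg_right key1 hσ2.le]
    calc a * Gd a / σ^2 ≤ (Gd u^2 + u * Gd u * Nd u)/(Nd u^2 * σ^2) := step
      _ = (Gd u * (1/σ))^2/(Nd u)^2 - (-(u) * Gd u) * (1/σ) * (1/σ)/(Nd u) := by
        field_simp
        ring
  · rw [hRHS, hd2, hd1, h1mf]
    have step : a * Gd a / σ^2 ≤ (Gd u^2 + (-u) * Gd u * Nd (-u))/(Nd (-u)^2 * σ^2) := by
      rw [div_le_div_iff₀ hσ2 (by positivity)]
      nlinarith [mul_le_mul_of_nonneg_right key2 hσ2.le]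
    calc a * Gd a / σ^2 ≤ (Gd u^2 + (-u) * Gd u * Nd (-u))/(Nd (-u)^2 * σ^2) := step
      _ = (Gd u * (1/σ))^2/(Nd (-u))^2 + (-(u) * Gd u) * (1/σ) * (1/σ)/(Nd (-u)) := by
        field_simp

/-- Probit model constant γ_α: for the probit link f(x) = Φ(x/σ) with Φ
the standard normal CDF, both curvature expressions are bounded below on |x| ≤ α by
(α/(√(2π)σ³))·exp(−α²/(2σ²)) > 0; hence so is their infimum over |x| ≤ α. -/
theorem one_bit_mc_probit_gamma_alpha
    (σ α : ℝ) (hσ : 0 < σ) (hα : 0 < α)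
    (Φ f : ℝ → ℝ)
    (hΦ : ∀ x, Φ x = ∫ t in Set.Iic x, Real.exp (-t ^ 2 / 2) / Real.sqrt (2 * Real.pi))
    (hf : ∀ x, f x = Φ (x / σ)) :
    (∀ x : ℝ, |x| ≤ α →
      α / (Real.sqrt (2 * Real.pi) * σ ^ 3) * Real.exp (-α ^ 2 / (2 * σ ^ 2)) ≤
        (deriv f x) ^ 2 / (f x) ^ 2 - deriv (deriv f) x / f x ∧
      α / (Real.sqrt (2 * Real.pi) * σ ^ 3) * Real.exp (-α ^ 2 / (2 * σ ^ 2)) ≤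
        (deriv f x) ^ 2 / (1 - f x) ^ 2 + deriv (deriv f) x / (1 - f x)) ∧
    0 < α / (Real.sqrt (2 * Real.pi) * σ ^ 3) * Real.exp (-α ^ 2 / (2 * σ ^ 2)) := by
  have hfN : f = fun x => Nd (x/σ) := by
    funext x
    rw [hf x, hΦ (x/σ)]
    rfl
  refine ⟨fun x hx => main_assembly σ α hσ hα f hfN x hx, ?_⟩
  apply mul_pos (div_pos hα (by positivity)) (Real.exp_pos _)
end

section
/- (Spectral-norm concentration of the realized gradient.) Let ‖M*‖_∞ ≤ α, let f : ℝ → (0,1) be twice differentiable with L_α < ∞, and let Y follow the 1-bit observation model with independent entries over (i,j) ∈ Ω. Let Z = ∇_M F_{Ω,Y}(M*), an m×n random matrix (m ≥ n) with independent entries. Then for every ε ∈ (0,1) there exist a constant C₁(ε) depending only on ε and a universal constant C₂ > 0 such that P( ‖Z‖₂ ≥ 2.01·L_α·√m ) ≤ C₁(ε)·exp(−C₂·m). -/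
open MeasureTheory ProbabilityTheory

noncomputable section

section MyTools
open Real Metric

private lemma div_arith (e E : ℝ) (hE : E ≠ 0) :
    (e * E - e * e) / E ^ 2 = e / E * (1 - e / E) := by
  field_simp

lemma hoeff_core (p : ℝ) (hp0 : 0 ≤ p) (hp1 : p ≤ 1) (s : ℝ) :
    1 - p + p * Real.exp s ≤ Real.exp (p * s + s ^ 2 / 8) := by
  set D : ℝ → ℝ := fun s => 1 - p + p * Real.exp s with hDdef
  have hD : ∀ s, 0 < D s := by
    intro s
    rcases eq_or_lt_of_le hp0 with h | h
    · simp [hDdef, ← h]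
    · have h1 : 0 < p * Real.exp s := mul_pos h (Real.exp_pos s)
      have h2 : (0:ℝ) ≤ 1 - p := by linarith
      simp only [hDdef]; nlinarith
  set g : ℝ → ℝ := fun s => p * Real.exp s / D s with hgdef
  have hg01 : ∀ s, 0 ≤ g s ∧ g s ≤ 1 := by
    intro s
    constructor
    · exact div_nonneg (mul_nonneg hp0 (Real.exp_pos s).le) (hD s).le
    · rw [hgdef, div_le_one (hD s)]
      simp only [hDdef]; nlinarith [Real.exp_pos s]
  have hDder : ∀ s, HasDerivAt D (p * Real.exp s) s := by
    intro s
    exact ((Real.hasDerivAt_exp s).const_mul p).const_add (1 - p)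
  have hgder : ∀ s, HasDerivAt g (g s * (1 - g s)) s := by
    intro s
    have h1 : HasDerivAt (fun s => p * Real.exp s) (p * Real.exp s) s :=
      (Real.hasDerivAt_exp s).const_mul p
    have h2 := h1.div (hDder s) (hD s).ne'
    rw [div_arith _ _ (hD s).ne'] at h2
    exact h2
  set H : ℝ → ℝ := fun s => p + s / 4 - g s with hHdef
  have hHder : ∀ s, HasDerivAt H (1 / 4 - g s * (1 - g s)) s := by
    intro s
    exact (((hasDerivAt_id s).div_const 4).const_add p).sub (hgder s)
  have hHmono : Monotone H := by
    apply monotone_of_deriv_nonneg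
    · exact fun s => (hHder s).differentiableAt
    · intro s
      rw [(hHder s).deriv]
      obtain ⟨h0, h1⟩ := hg01 s
      nlinarith [sq_nonneg (1 - 2 * g s)]
  have hH0 : H 0 = 0 := by
    simp only [hHdef, hgdef, hDdef]
    simp
  set h : ℝ → ℝ := fun s => p * s + s ^ 2 / 8 - Real.log (D s) with hhdef
  have hhder : ∀ s, HasDerivAt h (H s) s := by
    intro s
    have hlog : HasDerivAt (fun s => Real.log (D s)) (p * Real.exp s / D s) s :=
      (hDder s).log (hD s).ne'
    have h1 : HasDerivAt (fun s => p * s + s ^ 2 / 8) (p + 2 * s / 8) s := by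
      refine (((hasDerivAt_id s).const_mul p).add ((hasDerivAt_pow 2 s).div_const 8)).congr_deriv ?_
      rw [show (2:ℕ) - 1 = 1 from rfl]; push_cast; ring
    have h2 := h1.sub hlog
    have : p + 2 * s / 8 - p * Real.exp s / D s = H s := by
      simp only [hHdef, hgdef]; ring
    rwa [this] at h2
  have hdiff : Differentiable ℝ h := fun x => (hhder x).differentiableAt
  have hh0 : h 0 = 0 := by simp [hhdef, hDdef]
  have hhnn : ∀ s, 0 ≤ h s := by
    intro s
    rcases le_total 0 s with hs | hs
    · have hmono : MonotoneOn h (Set.Ici 0) := by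
        apply monotoneOn_of_deriv_nonneg (convex_Ici 0) hdiff.continuous.continuousOn
          (fun x _ => (hhder x).differentiableAt.differentiableWithinAt)
        intro x hx
        rw [(hhder x).deriv]
        have hx0 : (0:ℝ) ≤ x := le_of_lt (by simpa using hx)
        have := hHmono hx0
        rw [hH0] at this
        exact this
      calc (0:ℝ) = h 0 := hh0.symm
        _ ≤ h s := hmono Set.self_mem_Ici hs hs
    · have hmono : AntitoneOn h (Set.Iic 0) := by
        apply antitoneOn_of_deriv_nonpos (convex_Iic 0) hdiff.continuous.continuousOn
          (fun x _ => (hhder x).differentiableAt.differentiableWithinAt)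
        intro x hx
        rw [(hhder x).deriv]
        have hx0 : x ≤ (0:ℝ) := le_of_lt (by simpa using hx)
        have := hHmono hx0
        rw [hH0] at this
        exact this
      calc (0:ℝ) = h 0 := hh0.symm
        _ ≤ h s := hmono hs Set.self_mem_Iic hs
  have hfin := hhnn s
  simp only [hhdef] at hfin
  have hlog : Real.log (D s) ≤ p * s + s ^ 2 / 8 := by linarith
  calc D s = Real.exp (Real.log (D s)) := (Real.exp_log (hD s)).symm
    _ ≤ Real.exp (p * s + s ^ 2 / 8) := Real.exp_le_exp.mpr hlog

lemma two_point_mgf (p a b t : ℝ) (hp0 : 0 ≤ p) (hp1 : p ≤ 1)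
    (hmean : p * a + (1 - p) * b = 0) :
    p * Real.exp (t * a) + (1 - p) * Real.exp (t * b) ≤
      Real.exp (t ^ 2 * (a - b) ^ 2 / 8) := by
  set s := t * (a - b) with hs
  have hta : t * a = (1 - p) * s := by rw [hs]; linear_combination t * hmean
  have htb : t * b = -(p * s) := by rw [hs]; linear_combination t * hmean
  rw [hta, htb]
  have e1 : Real.exp ((1 - p) * s) = Real.exp s * Real.exp (-(p * s)) := by
    rw [← Real.exp_add]; ring_nf
  have h1 := hoeff_core p hp0 hp1 s
  have h2 : p * Real.exp ((1 - p) * s) + (1 - p) * Real.exp (-(p * s)) =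
      (1 - p + p * Real.exp s) * Real.exp (-(p * s)) := by rw [e1]; ring
  rw [h2]
  have h3 : (1 - p + p * Real.exp s) * Real.exp (-(p * s)) ≤
      Real.exp (p * s + s ^ 2 / 8) * Real.exp (-(p * s)) :=
    mul_le_mul_of_nonneg_right h1 (Real.exp_pos _).le
  refine h3.trans (le_of_eq ?_)
  rw [← Real.exp_add]
  congr 1
  rw [hs]
  ring


abbrev ES (k : ℕ) := EuclideanSpace ℝ (Fin k)

lemma sep_card_bound {k : ℕ} (hk : 0 < k) (F : Finset (ES k))
    (hsph : ∀ x ∈ F, ‖x‖ = 1)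
    (hsep : (F : Set (ES k)).Pairwise (fun a b => 1/5 < dist a b)) :
    F.card ≤ 11 ^ k := by
  haveI : Nonempty (Fin k) := ⟨⟨0, hk⟩⟩
  set c : ℝ := Real.sqrt π ^ Fintype.card (Fin k) / Real.Gamma (Fintype.card (Fin k) / 2 + 1)
    with hc
  have hcpos : 0 < c := by
    apply div_pos
    · exact pow_pos (Real.sqrt_pos.mpr Real.pi_pos) _
    · apply Real.Gamma_pos_of_pos; positivity
  have hdisj : (F : Set (ES k)).PairwiseDisjoint (fun x => ball x (1/10)) := by
    intro a ha b hb hab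
    exact ball_disjoint_ball (by linarith [hsep ha hb hab])
  have hmeas : ∀ x ∈ F, MeasurableSet (ball x (1/10) : Set (ES k)) :=
    fun x _ => measurableSet_ball
  have hunion := measure_biUnion_finset hdisj hmeas (μ := volume)
  have hsub : (⋃ x ∈ F, ball x (1/10)) ⊆ ball (0 : ES k) (11/10) := by
    intro z hz
    simp only [Set.mem_iUnion] at hz
    obtain ⟨x, hx, hz⟩ := hz
    refine ball_subset_ball' ?_ hz
    rw [dist_zero_right, hsph x hx]; norm_num
  have hle := (le_of_eq hunion.symm).trans (measure_mono hsub)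
  rw [EuclideanSpace.volume_ball] at hle
  have hvol : ∀ x : ES k, volume (ball x (1/10)) =
      ENNReal.ofReal (1/10) ^ Fintype.card (Fin k) * ENNReal.ofReal c := by
    intro x; rw [EuclideanSpace.volume_ball]
  rw [Finset.sum_congr rfl (fun x _ => hvol x), Finset.sum_const, nsmul_eq_mul] at hle
  -- now : ↑F.card * (ofReal (1/10) ^ card * ofReal c) ≤ ofReal (11/10) ^ card * ofReal c
  have h10 : (ENNReal.ofReal (1/10)) ≠ 0 := (ENNReal.ofReal_pos.mpr (by norm_num)).ne'
  have hfin : (ENNReal.ofReal (1/10) ^ Fintype.card (Fin k) * ENNReal.ofReal c) ≠ 0 :=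
    mul_ne_zero (pow_ne_zero _ h10) (ENNReal.ofReal_pos.mpr hcpos).ne'
  have hfin2 : (ENNReal.ofReal (1/10) ^ Fintype.card (Fin k) * ENNReal.ofReal c) ≠ ⊤ :=
    ENNReal.mul_ne_top (ENNReal.pow_ne_top ENNReal.ofReal_ne_top) ENNReal.ofReal_ne_top
  have h11 : ENNReal.ofReal (11/10) = 11 * ENNReal.ofReal (1/10) := by
    rw [show ((11:ENNReal)) = ENNReal.ofReal 11 by simp, ← ENNReal.ofReal_mul (by norm_num)]
    norm_num
  have hrw : ENNReal.ofReal (11/10) ^ Fintype.card (Fin k) * ENNReal.ofReal c =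
      (11:ENNReal) ^ Fintype.card (Fin k) *
        (ENNReal.ofReal (1/10) ^ Fintype.card (Fin k) * ENNReal.ofReal c) := by
    rw [h11, mul_pow, mul_assoc]
  rw [hrw] at hle
  have hcard : (F.card : ENNReal) ≤ (11:ENNReal) ^ Fintype.card (Fin k) :=
    (ENNReal.mul_le_mul_iff_left hfin hfin2).mp hle
  have : (F.card : ENNReal) ≤ ((11 ^ k : ℕ) : ENNReal) := by
    refine hcard.trans (le_of_eq ?_)
    simp [Fintype.card_fin]
  exact_mod_cast this

lemma exists_net (k : ℕ) : ∃ N : Finset (ES k),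
    (∀ x ∈ N, ‖x‖ = 1) ∧
    (∀ x : ES k, ‖x‖ = 1 → ∃ y ∈ N, dist x y ≤ 1/5) ∧
    N.card ≤ 11 ^ k := by
  rcases Nat.eq_zero_or_pos k with hk | hk
  · refine ⟨∅, by simp, ?_, by simp⟩
    intro x hx
    exfalso
    subst hk
    have : x = 0 := Subsingleton.elim x 0
    rw [this, norm_zero] at hx
    norm_num at hx
  · set S : Set (Set (ES k)) :=
      {T | T ⊆ sphere (0 : ES k) 1 ∧ T.Pairwise (fun a b => 1/5 < dist a b)} with hS
    obtain ⟨M, hM⟩ : ∃ M, Maximal (· ∈ S) M := by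
      apply zorn_subset
      intro c hcS hchain
      refine ⟨⋃₀ c, ⟨?_, ?_⟩, fun s hs => Set.subset_sUnion_of_mem hs⟩
      · exact Set.sUnion_subset fun s hs => (hcS hs).1
      · intro a ha b hb hab
        obtain ⟨s, hs, has⟩ := ha
        obtain ⟨t, ht, hbt⟩ := hb
        rcases hchain.total hs ht with h | h
        · exact (hcS ht).2 (h has) hbt hab
        · exact (hcS hs).2 has (h hbt) hab
    obtain ⟨⟨hMsph, hMsep⟩, hMmax⟩ := hM
    -- M is finite with card ≤ 11^k
    have hfinsub : ∀ F : Finset (ES k), ↑F ⊆ M → F.card ≤ 11 ^ k := by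
      intro F hF
      apply sep_card_bound hk F
      · intro x hx
        have := hMsph (hF hx)
        simpa [mem_sphere_iff_norm] using this
      · exact hMsep.mono hF
    have hMfin : M.Finite := by
      by_contra hinf
      obtain ⟨F, hFsub, hFcard⟩ := Set.Infinite.exists_subset_card_eq hinf (11 ^ k + 1)
      have := hfinsub F hFsub
      omega
    refine ⟨hMfin.toFinset, ?_, ?_, ?_⟩
    · intro x hx
      rw [Set.Finite.mem_toFinset] at hx
      simpa [mem_sphere_iff_norm] using hMsph hx
    · intro x hxn
      by_contra hcon
      push_neg at hcon
      have hfar : ∀ y ∈ M, 1/5 < dist x y := by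
        intro y hy
        have := hcon y (by rwa [Set.Finite.mem_toFinset])
        linarith
    -- then insert x M is in S, contradicting maximality
      have hxM : x ∉ M := fun hxM => by
        have := hfar x hxM; simp at this; linarith
      have hins : insert x M ∈ S := by
        constructor
        · exact Set.insert_subset (by simpa [mem_sphere_iff_norm] using hxn) hMsph
        · apply Set.Pairwise.insert hMsep
          intro b hb hxb
          constructor
          · exact hfar b hb
          · rw [dist_comm]; exact hfar b hb
      have := hMmax hins (Set.subset_insert x M)
      exact hxM (this (Set.mem_insert x M))
    · exact hfinsub _ (by simp)

section SpecTools
variable {m n : ℕ} (A : Matrix (Fin m) (Fin n) ℝ)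

lemma specSet_nonempty : {c : ℝ | ∃ x : Fin n → ℝ, (∑ j, (x j) ^ 2) ≤ 1 ∧
    c = Real.sqrt (∑ i, (A.mulVec x i) ^ 2)}.Nonempty :=
  ⟨Real.sqrt (∑ i, (A.mulVec 0 i) ^ 2), ⟨0, by simp, rfl⟩⟩

lemma specSet_bddAbove : BddAbove {c : ℝ | ∃ x : Fin n → ℝ, (∑ j, (x j) ^ 2) ≤ 1 ∧
    c = Real.sqrt (∑ i, (A.mulVec x i) ^ 2)} := by
  refine ⟨Real.sqrt (∑ i, ∑ j, (A i j) ^ 2), ?_⟩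
  rintro c ⟨x, hx, rfl⟩
  apply Real.sqrt_le_sqrt
  apply Finset.sum_le_sum
  intro i _
  have h1 : (A.mulVec x i) ^ 2 ≤ (∑ j, (A i j) ^ 2) * (∑ j, (x j) ^ 2) := by
    simpa [Matrix.mulVec, dotProduct] using
      Finset.sum_mul_sq_le_sq_mul_sq Finset.univ (fun j => A i j) x
  have h2 : (0:ℝ) ≤ ∑ j, (A i j) ^ 2 := Finset.sum_nonneg fun j _ => sq_nonneg _
  nlinarith

lemma le_specNorm (x : Fin n → ℝ) (hx : (∑ j, (x j) ^ 2) ≤ 1) :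
    Real.sqrt (∑ i, (A.mulVec x i) ^ 2) ≤ specNorm A :=
  le_csSup (specSet_bddAbove A) ⟨x, hx, rfl⟩

lemma specNorm_nonneg : 0 ≤ specNorm A := by
  have := le_specNorm A 0 (by simp)
  exact le_trans (Real.sqrt_nonneg _) this

lemma mulVec_sqrt_le (x : Fin n → ℝ) :
    Real.sqrt (∑ i, (A.mulVec x i) ^ 2) ≤ specNorm A * Real.sqrt (∑ j, (x j) ^ 2) := by
  rcases eq_or_lt_of_le (Finset.sum_nonneg (fun j (_ : j ∈ Finset.univ) => sq_nonneg (x j))) with h | h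
  · have hx0 : x = 0 := by
      funext j
      have := (Finset.sum_eq_zero_iff_of_nonneg (fun j _ => sq_nonneg (x j))).mp h.symm j
        (Finset.mem_univ j)
      exact pow_eq_zero_iff (by norm_num) |>.mp this
    subst hx0
    simp [Matrix.mulVec_zero]
  · set r := Real.sqrt (∑ j, (x j) ^ 2) with hr
    have hrpos : 0 < r := Real.sqrt_pos.mpr h
    have hru : (∑ j, ((r⁻¹ • x) j) ^ 2) ≤ 1 := by
      simp only [Pi.smul_apply, smul_eq_mul, mul_pow, ← Finset.mul_sum]
      rw [← Real.sq_sqrt h.le, ← hr]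
      rw [inv_pow, inv_mul_cancel₀ (by positivity)]
    have hkey := le_specNorm A (r⁻¹ • x) hru
    have hmv : ∀ i, (A.mulVec (r⁻¹ • x)) i = r⁻¹ * A.mulVec x i := by
      intro i; rw [Matrix.mulVec_smul]; simp
    rw [Finset.sum_congr rfl (fun i _ => by rw [hmv i, mul_pow]), ← Finset.mul_sum,
      Real.sqrt_mul (by positivity), Real.sqrt_sq (by positivity : (0:ℝ) ≤ r⁻¹)] at hkey
    calc Real.sqrt (∑ i, (A.mulVec x i) ^ 2)
        = r * (r⁻¹ * Real.sqrt (∑ i, (A.mulVec x i) ^ 2)) := by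
          field_simp
      _ ≤ r * specNorm A := by
          apply mul_le_mul_of_nonneg_left _ hrpos.le
          exact hkey
      _ = specNorm A * r := mul_comm _ _

lemma specNorm_attained : ∃ v : Fin n → ℝ, (∑ j, (v j) ^ 2) ≤ 1 ∧
    Real.sqrt (∑ i, (A.mulVec v i) ^ 2) = specNorm A := by
  set K : Set (Fin n → ℝ) := {x | ∑ j, (x j) ^ 2 ≤ 1} with hK
  have hcont_sum : Continuous fun x : Fin n → ℝ => ∑ j, (x j) ^ 2 :=
    continuous_finset_sum _ fun j _ => (continuous_apply j).pow 2
  have hKclosed : IsClosed K := isClosed_Iic.preimage hcont_sum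
  have hKsub : K ⊆ Metric.closedBall 0 1 := by
    intro x hx
    rw [Metric.mem_closedBall, dist_zero_right]
    rw [pi_norm_le_iff_of_nonneg zero_le_one]
    intro j
    rw [Real.norm_eq_abs, abs_le_one_iff_mul_self_le_one]
    have h1 : (x j) ^ 2 ≤ 1 :=
      le_trans (Finset.single_le_sum (fun j _ => sq_nonneg (x j)) (Finset.mem_univ j)) hx
    nlinarith
  have hKcomp : IsCompact K :=
    (isCompact_closedBall (0 : Fin n → ℝ) 1).of_isClosed_subset hKclosed hKsub
  have hφcont : Continuous fun x : Fin n → ℝ => Real.sqrt (∑ i, (A.mulVec x i) ^ 2) := by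
    apply Real.continuous_sqrt.comp
    apply continuous_finset_sum
    intro i _
    have : Continuous fun x : Fin n → ℝ => A.mulVec x i := by
      simp only [Matrix.mulVec, dotProduct]
      exact continuous_finset_sum _ fun j _ => continuous_const.mul (continuous_apply j)
    exact this.pow 2
  obtain ⟨v, hvK, hvmax⟩ := hKcomp.exists_isMaxOn ⟨0, by simp [hK]⟩ hφcont.continuousOn
  refine ⟨v, hvK, le_antisymm (le_specNorm A v hvK) ?_⟩
  apply csSup_le (specSet_nonempty A)
  rintro c ⟨x, hx, rfl⟩
  exact hvmax hx

lemma dot_mulVec_comm (u : Fin m → ℝ) (y : Fin n → ℝ) :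
    ∑ i, u i * A.mulVec y i = ∑ j, A.transpose.mulVec u j * y j := by
  simp only [Matrix.mulVec, dotProduct, Matrix.transpose_apply, Finset.mul_sum,
    Finset.sum_mul]
  rw [Finset.sum_comm]
  exact Finset.sum_congr rfl fun j _ => Finset.sum_congr rfl fun i _ => by ring

lemma abs_dot_mulVec_le (e : Fin m → ℝ) (y : Fin n → ℝ) :
    |∑ i, e i * A.mulVec y i| ≤
      specNorm A * Real.sqrt (∑ i, (e i) ^ 2) * Real.sqrt (∑ j, (y j) ^ 2) := by
  have hcs : (∑ i, e i * A.mulVec y i) ^ 2 ≤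
      (∑ i, (e i) ^ 2) * (∑ i, (A.mulVec y i) ^ 2) :=
    Finset.sum_mul_sq_le_sq_mul_sq Finset.univ e (fun i => A.mulVec y i)
  have h1 : |∑ i, e i * A.mulVec y i| ≤
      Real.sqrt ((∑ i, (e i) ^ 2) * (∑ i, (A.mulVec y i) ^ 2)) := by
    rw [← Real.sqrt_sq_eq_abs]
    exact Real.sqrt_le_sqrt hcs
  rw [Real.sqrt_mul (Finset.sum_nonneg fun i _ => sq_nonneg _)] at h1
  refine h1.trans ?_
  rw [mul_comm (specNorm A) _, mul_assoc]
  apply mul_le_mul_of_nonneg_left (mulVec_sqrt_le A y) (Real.sqrt_nonneg _)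

lemma exists_singular_pair (hσ : 0 < specNorm A) :
    ∃ (u : Fin m → ℝ) (v : Fin n → ℝ), (∑ i, (u i) ^ 2) = 1 ∧ (∑ j, (v j) ^ 2) = 1 ∧
      (∀ i, A.mulVec v i = specNorm A * u i) ∧
      (∀ j, A.transpose.mulVec u j = specNorm A * v j) := by
  set σ := specNorm A with hσdef
  obtain ⟨v, hv1, hvmax⟩ := specNorm_attained A
  have hAvnn : (0:ℝ) ≤ ∑ i, (A.mulVec v i) ^ 2 := Finset.sum_nonneg fun i _ => sq_nonneg _
  have hAv2 : ∑ i, (A.mulVec v i) ^ 2 = σ ^ 2 := by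
    rw [hσdef, ← hvmax, Real.sq_sqrt hAvnn]
  set u : Fin m → ℝ := fun i => σ⁻¹ * A.mulVec v i with hudef
  have hu2 : ∑ i, (u i) ^ 2 = 1 := by
    simp only [hudef, mul_pow, ← Finset.mul_sum, hAv2]
    field_simp
  have hAvu : ∀ i, A.mulVec v i = σ * u i := by
    intro i; simp only [hudef]; field_simp
  set w : Fin n → ℝ := A.transpose.mulVec u with hwdef
  have hwv : ∑ j, w j * v j = σ := by
    rw [← dot_mulVec_comm A u v]
    have : ∀ i, u i * A.mulVec v i = σ⁻¹ * (A.mulVec v i) ^ 2 := by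
      intro i; simp only [hudef]; ring
    rw [Finset.sum_congr rfl fun i _ => this i, ← Finset.mul_sum, hAv2]
    field_simp
  have hwnn : (0:ℝ) ≤ ∑ j, (w j) ^ 2 := Finset.sum_nonneg fun j _ => sq_nonneg _
  have hwsq : ∑ j, (w j) ^ 2 ≤ σ ^ 2 := by
    have h1 : ∑ j, (w j) ^ 2 = ∑ i, u i * A.mulVec w i := by
      rw [dot_mulVec_comm A u w, ← hwdef]
      exact Finset.sum_congr rfl fun j _ => pow_two (w j)
    have h2 : |∑ i, u i * A.mulVec w i| ≤
        σ * Real.sqrt (∑ i, (u i) ^ 2) * Real.sqrt (∑ j, (w j) ^ 2) :=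
      abs_dot_mulVec_le A u w
    rw [hu2, Real.sqrt_one, mul_one] at h2
    have h3 : ∑ j, (w j) ^ 2 ≤ σ * Real.sqrt (∑ j, (w j) ^ 2) :=
      h1.trans_le ((le_abs_self _).trans h2)
    have h4 : Real.sqrt (∑ j, (w j) ^ 2) ≤ σ := by
      rcases eq_or_lt_of_le hwnn with h | h
      · rw [← h, Real.sqrt_zero]; exact hσ.le
      · have hsq : Real.sqrt (∑ j, (w j) ^ 2) > 0 := Real.sqrt_pos.mpr h
        have ht2 : Real.sqrt (∑ j, (w j) ^ 2) ^ 2 ≤ σ * Real.sqrt (∑ j, (w j) ^ 2) := by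
          rw [Real.sq_sqrt hwnn]; exact h3
        nlinarith
    calc ∑ j, (w j) ^ 2 ≤ σ * Real.sqrt (∑ j, (w j) ^ 2) := h3
      _ ≤ σ * σ := mul_le_mul_of_nonneg_left h4 hσ.le
      _ = σ ^ 2 := (sq σ).symm
  have hwv2 : ∀ j, w j = σ * v j := by
    have hexp : ∀ j, (w j - σ * v j) ^ 2 =
        (w j) ^ 2 - 2 * σ * (w j * v j) + σ ^ 2 * (v j) ^ 2 := fun j => by ring
    have hsum : ∑ j, (w j - σ * v j) ^ 2 =
        (∑ j, (w j) ^ 2) - 2 * σ * (∑ j, w j * v j) + σ ^ 2 * (∑ j, (v j) ^ 2) := by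
      simp only [hexp, Finset.sum_add_distrib, Finset.sum_sub_distrib, ← Finset.mul_sum]
    have hle : ∑ j, (w j - σ * v j) ^ 2 ≤ 0 := by
      rw [hsum, hwv]
      nlinarith [sq_nonneg σ]
    have hzero : ∑ j, (w j - σ * v j) ^ 2 = 0 :=
      le_antisymm hle (Finset.sum_nonneg fun j _ => sq_nonneg _)
    intro j
    have := (Finset.sum_eq_zero_iff_of_nonneg fun j _ => sq_nonneg (w j - σ * v j)).mp hzero j
      (Finset.mem_univ j)
    have := (pow_eq_zero_iff two_ne_zero).mp this
    linarith [this]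
  have hv2 : ∑ j, (v j) ^ 2 = 1 := by
    have hsum : ∑ j, w j * v j = σ * ∑ j, (v j) ^ 2 := by
      rw [Finset.mul_sum]
      exact Finset.sum_congr rfl fun j _ => by rw [hwv2 j]; ring
    have hmul : σ * (∑ j, (v j) ^ 2) = σ * 1 := by rw [mul_one, ← hsum]; exact hwv
    exact mul_left_cancel₀ hσ.ne' hmul
  exact ⟨u, v, hu2, hv2, hAvu, hwv2⟩

lemma net_lower_bound (hσ : 0 < specNorm A)
    (u x : Fin m → ℝ) (v y : Fin n → ℝ)
    (hu2 : (∑ i, (u i) ^ 2) = 1) (hv2 : (∑ j, (v j) ^ 2) = 1)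
    (hAvu : ∀ i, A.mulVec v i = specNorm A * u i)
    (hAtu : ∀ j, A.transpose.mulVec u j = specNorm A * v j)
    (hx2 : (∑ i, (x i) ^ 2) = 1) (hy2 : (∑ j, (y j) ^ 2) = 1)
    (hxu : ∑ i, (x i - u i) ^ 2 ≤ 1/25) (hyv : ∑ j, (y j - v j) ^ 2 ≤ 1/25) :
    23/25 * specNorm A ≤ ∑ i, x i * A.mulVec y i := by
  set σ := specNorm A with hσdef
  set e' : Fin n → ℝ := fun j => y j - v j with he'
  have hye : y = v + e' := by funext j; simp [he']
  have hAy : ∀ i, A.mulVec y i = σ * u i + A.mulVec e' i := by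
    intro i
    rw [hye, Matrix.mulVec_add]
    simp [hAvu i]
  have hsplit : ∑ i, x i * A.mulVec y i =
      σ * (∑ i, x i * u i) + ∑ i, x i * A.mulVec e' i := by
    calc ∑ i, x i * A.mulVec y i
        = ∑ i, (σ * (x i * u i) + x i * A.mulVec e' i) :=
          Finset.sum_congr rfl fun i _ => by rw [hAy i]; ring
      _ = σ * (∑ i, x i * u i) + ∑ i, x i * A.mulVec e' i := by
          rw [Finset.sum_add_distrib, ← Finset.mul_sum]
  have hsplit2 : ∑ i, x i * A.mulVec e' i =
      σ * (∑ j, v j * e' j) + ∑ i, (x i - u i) * A.mulVec e' i := by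
    have h1 : ∑ i, x i * A.mulVec e' i =
        ∑ i, u i * A.mulVec e' i + ∑ i, (x i - u i) * A.mulVec e' i := by
      rw [← Finset.sum_add_distrib]
      exact Finset.sum_congr rfl fun i _ => by ring
    rw [h1, dot_mulVec_comm A u e']
    congr 1
    calc ∑ j, A.transpose.mulVec u j * e' j
        = ∑ j, σ * (v j * e' j) := Finset.sum_congr rfl fun j _ => by rw [hAtu j]; ring
      _ = σ * ∑ j, v j * e' j := by rw [← Finset.mul_sum]
  -- bounds
  have hxu2 : 49/50 ≤ ∑ i, x i * u i := by
    have hpt : ∀ i, (x i - u i) ^ 2 = (x i) ^ 2 - 2 * (x i * u i) + (u i) ^ 2 :=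
      fun i => by ring
    have hthis : ∑ i, (x i - u i) ^ 2 =
        (∑ i, (x i) ^ 2) - 2 * (∑ i, x i * u i) + (∑ i, (u i) ^ 2) := by
      simp only [hpt, Finset.sum_add_distrib, Finset.sum_sub_distrib, ← Finset.mul_sum]
    rw [hx2, hu2] at hthis
    linarith [hxu, hthis]
  have hve' : -(1/50) ≤ ∑ j, v j * e' j := by
    have hpt : ∀ j, (y j - v j) ^ 2 = (y j) ^ 2 - 2 * (y j * v j) + (v j) ^ 2 :=
      fun j => by ring
    have h0 : ∑ j, (y j - v j) ^ 2 =
        (∑ j, (y j) ^ 2) - 2 * (∑ j, y j * v j) + (∑ j, (v j) ^ 2) := by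
      simp only [hpt, Finset.sum_add_distrib, Finset.sum_sub_distrib, ← Finset.mul_sum]
    rw [hy2, hv2] at h0
    have h1 : ∑ j, v j * e' j = (∑ j, y j * v j) - 1 := by
      rw [← hv2, ← Finset.sum_sub_distrib]
      exact Finset.sum_congr rfl fun j _ => by simp [he']; ring
    linarith [hyv, h0]
  have hcross : -(σ/25) ≤ ∑ i, (x i - u i) * A.mulVec e' i := by
    have h1 := abs_dot_mulVec_le A (fun i => x i - u i) e'
    have h2 : Real.sqrt (∑ i, (x i - u i) ^ 2) ≤ 1/5 := by
      rw [show (1/5 : ℝ) = Real.sqrt (1/25) by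
        rw [show (1/25 : ℝ) = (1/5)^2 by norm_num, Real.sqrt_sq (by norm_num)]]
      exact Real.sqrt_le_sqrt hxu
    have h3 : Real.sqrt (∑ j, (e' j) ^ 2) ≤ 1/5 := by
      rw [show (1/5 : ℝ) = Real.sqrt (1/25) by
        rw [show (1/25 : ℝ) = (1/5)^2 by norm_num, Real.sqrt_sq (by norm_num)]]
      exact Real.sqrt_le_sqrt hyv
    have h4 : σ * Real.sqrt (∑ i, (x i - u i) ^ 2) * Real.sqrt (∑ j, (e' j) ^ 2) ≤ σ / 25 := by
      calc σ * Real.sqrt (∑ i, (x i - u i) ^ 2) * Real.sqrt (∑ j, (e' j) ^ 2)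
          ≤ σ * (1/5) * (1/5) := by
            apply mul_le_mul
            · exact mul_le_mul_of_nonneg_left h2 hσ.le
            · exact h3
            · exact Real.sqrt_nonneg _
            · positivity
        _ = σ / 25 := by ring
    have := neg_abs_le (∑ i, (x i - u i) * A.mulVec e' i)
    have h5 := h1.trans h4
    linarith
  rw [hsplit, hsplit2]
  have hb1 : σ * (49/50) ≤ σ * (∑ i, x i * u i) := mul_le_mul_of_nonneg_left hxu2 hσ.le
  have hb2 : σ * (-(1/50)) ≤ σ * (∑ j, v j * e' j) := mul_le_mul_of_nonneg_left hve' hσ.le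
  linarith

end SpecTools


lemma es_norm (k : ℕ) (x : ES k) : ‖x‖ = Real.sqrt (∑ i, (x i) ^ 2) := by
  rw [EuclideanSpace.norm_eq]
  congr 1
  exact Finset.sum_congr rfl fun i _ => by rw [Real.norm_eq_abs, sq_abs]

lemma es_dist (k : ℕ) (x y : ES k) : dist x y = Real.sqrt (∑ i, (x i - y i) ^ 2) := by
  rw [EuclideanSpace.dist_eq]
  congr 1
  exact Finset.sum_congr rfl fun i _ => by rw [Real.dist_eq, sq_abs]

lemma exists_net' (k : ℕ) : ∃ N : Finset (ES k),
    (∀ x ∈ N, ∑ i, (x i : ℝ) ^ 2 = 1) ∧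
    (∀ u : Fin k → ℝ, ∑ i, (u i) ^ 2 = 1 →
      ∃ x ∈ N, ∑ i, ((x : Fin k → ℝ) i - u i) ^ 2 ≤ 1/25) ∧
    N.card ≤ 11 ^ k := by
  obtain ⟨N, hN1, hN2, hN3⟩ := exists_net k
  refine ⟨N, ?_, ?_, hN3⟩
  · intro x hx
    have h1 := hN1 x hx
    rw [es_norm] at h1
    have h2 : (0:ℝ) ≤ ∑ i, (x i) ^ 2 := Finset.sum_nonneg fun i _ => sq_nonneg _
    nlinarith [Real.sq_sqrt h2]
  · intro u hu
    set ue : ES k := WithLp.toLp 2 u with hue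
    have hnorm : ‖ue‖ = 1 := by
      rw [es_norm]
      show Real.sqrt (∑ i, (u i) ^ 2) = 1
      rw [hu, Real.sqrt_one]
    obtain ⟨y, hyN, hyd⟩ := hN2 ue hnorm
    refine ⟨y, hyN, ?_⟩
    have hd : dist ue y ≤ 1/5 := hyd
    rw [es_dist] at hd
    have h2 : (0:ℝ) ≤ ∑ i, (ue i - y i) ^ 2 := Finset.sum_nonneg fun i _ => sq_nonneg _
    have h3 : ∑ i, (ue i - y i) ^ 2 ≤ 1/25 := by
      nlinarith [Real.sq_sqrt h2, Real.sqrt_nonneg (∑ i, (ue i - y i) ^ 2), hd]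
    calc ∑ i, ((y : Fin k → ℝ) i - u i) ^ 2
        = ∑ i, (ue i - y i) ^ 2 := Finset.sum_congr rfl fun i _ => by ring
      _ ≤ 1/25 := h3

lemma bilin_eq {m n : ℕ} (A : Matrix (Fin m) (Fin n) ℝ) (x : Fin m → ℝ) (y : Fin n → ℝ) :
    ∑ i, x i * A.mulVec y i = ∑ p : Fin m × Fin n, x p.1 * y p.2 * A p.1 p.2 := by
  simp only [Matrix.mulVec, dotProduct, Finset.mul_sum]
  rw [Fintype.sum_prod_type]
  exact Finset.sum_congr rfl fun i _ => Finset.sum_congr rfl fun j _ => by ring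

lemma pair_chernoff
    {m n : ℕ} {Ωs : Type} [MeasurableSpace Ωs] (P : Measure Ωs) [IsProbabilityMeasure P]
    (Y : Ωs → Matrix (Fin m) (Fin n) ℝ)
    (hYpm : ∀ ω i j, Y ω i j = 1 ∨ Y ω i j = -1)
    (hYmeas : ∀ p : Fin m × Fin n, Measurable fun ω => Y ω p.1 p.2)
    (hInd : iIndepFun (fun (p : Fin m × Fin n) ω => Y ω p.1 p.2) P)
    (ΩS : Finset (Fin m × Fin n))
    (q a b : Fin m × Fin n → ℝ)
    (hq : ∀ p ∈ ΩS, P {ω | Y ω p.1 p.2 = 1} = ENNReal.ofReal (q p))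
    (hq01 : ∀ p ∈ ΩS, 0 ≤ q p ∧ q p ≤ 1)
    (hmean : ∀ p ∈ ΩS, q p * a p + (1 - q p) * b p = 0)
    (L : ℝ) (hL : 0 < L) (hgap : ∀ p ∈ ΩS, |a p - b p| ≤ L)
    (x : Fin m → ℝ) (y : Fin n → ℝ)
    (hx2 : ∑ i, (x i) ^ 2 = 1) (hy2 : ∑ j, (y j) ^ 2 = 1)
    (t : ℝ) (ht : 0 < t) :
    P {ω | t ≤ ∑ p : Fin m × Fin n, x p.1 * y p.2 *
        (if p ∈ ΩS then ((if Y ω p.1 p.2 = 1 then a p else 0)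
          + (if Y ω p.1 p.2 = -1 then b p else 0)) else 0)} ≤
      ENNReal.ofReal (Real.exp (-(2 * t ^ 2 / L ^ 2))) := by
  classical
  set g : (Fin m × Fin n) → ℝ → ℝ := fun p s => x p.1 * y p.2 *
      (if p ∈ ΩS then ((if s = 1 then a p else 0) + (if s = -1 then b p else 0)) else 0)
    with hgdef
  have h1meas : MeasurableSet {s : ℝ | s = 1} := by
    rw [Set.setOf_eq_eq_singleton]; exact measurableSet_singleton 1
  have h2meas : MeasurableSet {s : ℝ | s = -1} := by
    rw [Set.setOf_eq_eq_singleton]; exact measurableSet_singleton (-1)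
  have hgmeas : ∀ p, Measurable (g p) := by
    intro p
    apply Measurable.const_mul
    by_cases hp : p ∈ ΩS
    · simp only [hp, if_true]
      exact ((measurable_const.ite h1meas measurable_const).add
        (measurable_const.ite h2meas measurable_const))
    · simp only [hp, if_false]
      exact measurable_const
  set W : (Fin m × Fin n) → Ωs → ℝ := fun p ω => g p (Y ω p.1 p.2) with hWdef
  have hWind : iIndepFun W P := hInd.comp g hgmeas
  have hWmeas : ∀ p, Measurable (W p) := fun p => (hgmeas p).comp (hYmeas p)
  set lam : ℝ := 4 * t / L ^ 2 with hlam
  have hlampos : 0 < lam := by positivity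
  -- entry bounds
  have hab : ∀ p ∈ ΩS, |a p| ≤ L ∧ |b p| ≤ L := by
    intro p hp
    obtain ⟨hq0, hq1⟩ := hq01 p hp
    have hm := hmean p hp
    have hga : a p = (1 - q p) * (a p - b p) := by linear_combination hm
    have hgb : b p = -(q p) * (a p - b p) := by linear_combination hm
    constructor
    · rw [hga, abs_mul]
      calc |1 - q p| * |a p - b p| ≤ 1 * L := by
            apply mul_le_mul _ (hgap p hp) (abs_nonneg _) zero_le_one
            rw [abs_le]; constructor <;> linarith
        _ = L := one_mul L
    · rw [hgb, abs_mul]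
      calc |-(q p)| * |a p - b p| ≤ 1 * L := by
            apply mul_le_mul _ (hgap p hp) (abs_nonneg _) zero_le_one
            rw [abs_neg, abs_le]; constructor <;> linarith
        _ = L := one_mul L
  have hWbound : ∀ p ω, |W p ω| ≤ |x p.1 * y p.2| * L := by
    intro p ω
    simp only [hWdef, hgdef, abs_mul]
    apply mul_le_mul_of_nonneg_left _ (mul_nonneg (abs_nonneg _) (abs_nonneg _))
    by_cases hp : p ∈ ΩS
    · simp only [hp, if_true]
      obtain ⟨ha, hb⟩ := hab p hp
      rcases hYpm ω p.1 p.2 with h | h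
      · rw [h]; norm_num [ha]
      · rw [h]; norm_num [hb]
    · simp only [hp, if_false, abs_zero]
      exact hL.le
  -- mgf bound per coordinate
  have hmgf : ∀ p, mgf (W p) P lam ≤ Real.exp (lam ^ 2 * ((x p.1 * y p.2) ^ 2 * L ^ 2) / 8) := by
    intro p
    by_cases hp : p ∈ ΩS
    · set c1 : ℝ := x p.1 * y p.2 * a p with hc1
      set c2 : ℝ := x p.1 * y p.2 * b p with hc2
      have hA : MeasurableSet {ω | Y ω p.1 p.2 = 1} := (hYmeas p) h1meas
      have hfun : (fun ω => Real.exp (lam * W p ω)) =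
          fun ω => Set.indicator {ω | Y ω p.1 p.2 = 1} (fun _ => Real.exp (lam * c1)) ω
            + Set.indicator {ω | Y ω p.1 p.2 = 1}ᶜ (fun _ => Real.exp (lam * c2)) ω := by
        funext ω
        by_cases hω : Y ω p.1 p.2 = 1
        · simp only [Set.indicator_apply, Set.mem_compl_iff, Set.mem_setOf_eq, hω, if_true,
            not_true, if_false, add_zero, if_neg (by norm_num : ¬(1:ℝ) = -1)]
          simp only [hWdef, hgdef, hp, if_true, hω]
          norm_num [hc1]
        · have hω2 : Y ω p.1 p.2 = -1 := (hYpm ω p.1 p.2).resolve_left hω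
          simp only [Set.indicator_apply, Set.mem_compl_iff, Set.mem_setOf_eq, hω, if_false,
            not_false_iff, if_true, zero_add]
          simp only [hWdef, hgdef, hp, if_true, hω2]
          norm_num [hc2]
      have hPA : P {ω | Y ω p.1 p.2 = 1} = ENNReal.ofReal (q p) := hq p hp
      obtain ⟨hq0, hq1⟩ := hq01 p hp
      have hPAc : (P {ω | Y ω p.1 p.2 = 1}ᶜ).toReal = 1 - q p := by
        rw [measure_compl hA (measure_ne_top P _), hPA, measure_univ]
        rw [ENNReal.toReal_sub_of_le (by simpa using ENNReal.ofReal_le_one.mpr hq1) ENNReal.one_ne_top]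
        simp [ENNReal.toReal_ofReal hq0]
      have hmgfeq : mgf (W p) P lam =
          q p * Real.exp (lam * c1) + (1 - q p) * Real.exp (lam * c2) := by
        rw [mgf]
        rw [hfun]
        rw [integral_add]
        · rw [integral_indicator_const _ hA, integral_indicator_const _ hA.compl,
            measureReal_def, measureReal_def, hPAc, hPA, ENNReal.toReal_ofReal hq0]
          simp [smul_eq_mul]
        · exact (integrable_const _).indicator hA
        · exact (integrable_const _).indicator hA.compl
      rw [hmgfeq]
      have hm2 : q p * c1 + (1 - q p) * c2 = 0 := by
        simp only [hc1, hc2]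
        linear_combination (x p.1 * y p.2) * hmean p hp
      have := two_point_mgf (q p) c1 c2 lam hq0 hq1 hm2
      refine this.trans (Real.exp_le_exp.mpr ?_)
      have hgap2 : (c1 - c2) ^ 2 ≤ (x p.1 * y p.2) ^ 2 * L ^ 2 := by
        have : c1 - c2 = x p.1 * y p.2 * (a p - b p) := by rw [hc1, hc2]; ring
        rw [this, mul_pow]
        apply mul_le_mul_of_nonneg_left _ (sq_nonneg _)
        rw [← sq_abs]
        apply pow_le_pow_left₀ (abs_nonneg _) (hgap p hp)
      exact (div_le_div_iff_of_pos_right (by norm_num : (0:ℝ) < 8)).mpr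
        (mul_le_mul_of_nonneg_left hgap2 (sq_nonneg lam))

    · have hW0 : W p = fun _ => 0 := by
        funext ω; simp [hWdef, hgdef, hp]
      rw [hW0, mgf_const]
      rw [mul_zero, Real.exp_zero]
      apply Real.one_le_exp
      positivity
  -- the sum
  set S : Ωs → ℝ := fun ω => ∑ p, W p ω with hSdef
  have hSmeas : Measurable S := Finset.measurable_sum _ fun p _ => hWmeas p
  have hmgfsum : mgf S P lam = ∏ p, mgf (W p) P lam := by
    have h1 : S = ∑ p, W p := by funext ω; rw [Finset.sum_apply]
    rw [h1]
    exact hWind.mgf_sum hWmeas Finset.univ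
  have hsumxy : ∑ p : Fin m × Fin n, (x p.1 * y p.2) ^ 2 = 1 := by
    calc ∑ p : Fin m × Fin n, (x p.1 * y p.2) ^ 2
        = ∑ i, ∑ j, (x i) ^ 2 * (y j) ^ 2 := by
          rw [Fintype.sum_prod_type]
          exact Finset.sum_congr rfl fun i _ => Finset.sum_congr rfl fun j _ => mul_pow _ _ _
      _ = (∑ i, (x i) ^ 2) * (∑ j, (y j) ^ 2) := (Finset.sum_mul_sum _ _ _ _).symm
      _ = 1 := by rw [hx2, hy2, one_mul]
  have hmgfbound : mgf S P lam ≤ Real.exp (lam ^ 2 * L ^ 2 / 8) := by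
    rw [hmgfsum]
    calc ∏ p, mgf (W p) P lam
        ≤ ∏ p : Fin m × Fin n, Real.exp (lam ^ 2 * ((x p.1 * y p.2) ^ 2 * L ^ 2) / 8) :=
          Finset.prod_le_prod (fun p _ => mgf_nonneg) (fun p _ => hmgf p)
      _ = Real.exp (∑ p : Fin m × Fin n, lam ^ 2 * ((x p.1 * y p.2) ^ 2 * L ^ 2) / 8) :=
          (Real.exp_sum _ _).symm
      _ = Real.exp (lam ^ 2 * L ^ 2 / 8) := by
          congr 1
          have : ∀ p : Fin m × Fin n, lam ^ 2 * ((x p.1 * y p.2) ^ 2 * L ^ 2) / 8 =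
              (lam ^ 2 * L ^ 2 / 8) * (x p.1 * y p.2) ^ 2 := fun p => by ring
          rw [Finset.sum_congr rfl fun p _ => this p, ← Finset.mul_sum, hsumxy, mul_one]
  set B : ℝ := ∑ p : Fin m × Fin n, |x p.1 * y p.2| * L with hB
  have hSbound : ∀ ω, S ω ≤ B := by
    intro ω
    apply Finset.sum_le_sum
    intro p _
    exact (le_abs_self _).trans (hWbound p ω)
  have hint : Integrable (fun ω => Real.exp (lam * S ω)) P := by
    refine Integrable.mono' (integrable_const (Real.exp (lam * B)))
      ((hSmeas.const_mul lam).exp).aestronglyMeasurable (ae_of_all _ ?_)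
    intro ω
    rw [Real.norm_eq_abs, Real.abs_exp]
    exact Real.exp_le_exp.mpr (mul_le_mul_of_nonneg_left (hSbound ω) hlampos.le)
  have hch := measure_ge_le_exp_mul_mgf (μ := P) (X := S) t hlampos.le hint
  have hfinal : (P {ω | t ≤ S ω}).toReal ≤ Real.exp (-(2 * t ^ 2 / L ^ 2)) := by
    refine hch.trans ?_
    calc Real.exp (-lam * t) * mgf S P lam
        ≤ Real.exp (-lam * t) * Real.exp (lam ^ 2 * L ^ 2 / 8) :=
          mul_le_mul_of_nonneg_left hmgfbound (Real.exp_nonneg _)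
      _ = Real.exp (-lam * t + lam ^ 2 * L ^ 2 / 8) := (Real.exp_add _ _).symm
      _ = Real.exp (-(2 * t ^ 2 / L ^ 2)) := by
          congr 1
          rw [hlam]
          field_simp
          ring
  have hev : {ω | t ≤ ∑ p : Fin m × Fin n, x p.1 * y p.2 *
      (if p ∈ ΩS then ((if Y ω p.1 p.2 = 1 then a p else 0)
        + (if Y ω p.1 p.2 = -1 then b p else 0)) else 0)} = {ω | t ≤ S ω} := rfl
  rw [hev]
  exact (ENNReal.le_ofReal_iff_toReal_le (measure_ne_top P _) (Real.exp_nonneg _)).mpr hfinal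

end MyTools

/-- Spectral-norm concentration of the realized gradient: for the gradient
Z = ∇F(M*) under the 1-bit observation model with independent entries,
P(‖Z‖₂ ≥ 2.01·L_α·√m) ≤ C₁(ε)·exp(−C₂·m). -/
theorem one_bit_mc_gradient_spectral_concentration :
    ∀ ε ∈ Set.Ioo (0 : ℝ) 1,
      ∃ C₁ : ℝ, 0 < C₁ ∧ ∃ C₂ : ℝ, 0 < C₂ ∧
        ∀ (m n : ℕ) (α Lα : ℝ)
          (Mstar : Matrix (Fin m) (Fin n) ℝ)
          (ΩS : Finset (Fin m × Fin n)) (f : ℝ → ℝ)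
          (Ωs : Type) [MeasurableSpace Ωs] (P : Measure Ωs)
          [IsProbabilityMeasure P]
          (Y : Ωs → Matrix (Fin m) (Fin n) ℝ),
          n ≤ m →
          -- ‖M*‖_∞ ≤ α
          (∀ i j, |Mstar i j| ≤ α) →
          -- twice differentiable link f : ℝ → (0,1)
          (∀ x, f x ∈ Set.Ioo (0 : ℝ) 1) →
          Differentiable ℝ f → Differentiable ℝ (deriv f) →
          -- L_α as in (6), finite and positive
          (∀ x, |x| ≤ α → |deriv f x| / (f x * (1 - f x)) ≤ Lα) →
          0 < Lα →
          -- the 1-bit observation model, with independent entries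
          (∀ ω i j, Y ω i j = 1 ∨ Y ω i j = -1) →
          (∀ p : Fin m × Fin n, Measurable fun ω => Y ω p.1 p.2) →
          (∀ p ∈ ΩS, P {ω | Y ω p.1 p.2 = 1} = ENNReal.ofReal (f (Mstar p.1 p.2))) →
          iIndepFun (fun (p : Fin m × Fin n) ω => Y ω p.1 p.2) P →
          P {ω | 2.01 * Lα * Real.sqrt m ≤ specNorm (gradF ΩS (Y ω) f Mstar)} ≤
            ENNReal.ofReal (C₁ * Real.exp (-C₂ * m)) := by
  intro ε hε
  refine ⟨1, one_pos, 1/100, by norm_num, ?_⟩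
  intro m n α Lα Mstar ΩS f Ωs _ P _ Y hnm hMα hf01 hfd hfd2 hLα hLpos hYpm hYmeas hq hInd
  rcases Nat.eq_zero_or_pos m with hm0 | hm
  · subst hm0
    have h1 : ENNReal.ofReal (1 * Real.exp (-(1/100) * ((0:ℕ):ℝ))) = 1 := by norm_num
    rw [h1]
    exact prob_le_one
  -- main case: m ≥ 1
  set Z : Ωs → Matrix (Fin m) (Fin n) ℝ := fun ω => gradF ΩS (Y ω) f Mstar with hZ
  set aa : Fin m × Fin n → ℝ :=
    fun p => -(deriv f (Mstar p.1 p.2) / f (Mstar p.1 p.2)) with haa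
  set bb : Fin m × Fin n → ℝ :=
    fun p => deriv f (Mstar p.1 p.2) / (1 - f (Mstar p.1 p.2)) with hbb
  set q : Fin m × Fin n → ℝ := fun p => f (Mstar p.1 p.2) with hqdef
  have hsqm : (0:ℝ) < Real.sqrt m :=
    Real.sqrt_pos.mpr (by exact_mod_cast hm)
  set T : ℝ := 2.01 * Lα * Real.sqrt m with hT
  have hTpos : 0 < T := by
    rw [hT]; positivity
  set t : ℝ := 23/25 * T with htdef
  have htpos : 0 < t := by rw [htdef]; positivity
  obtain ⟨Nm, hNm1, hNm2, hNmcard⟩ := exists_net' m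
  obtain ⟨Nn, hNn1, hNn2, hNncard⟩ := exists_net' n
  set E : ES m → ES n → Set Ωs := fun x y => {ω | t ≤ ∑ p : Fin m × Fin n, x p.1 * y p.2 *
      (if p ∈ ΩS then ((if Y ω p.1 p.2 = 1 then aa p else 0)
        + (if Y ω p.1 p.2 = -1 then bb p else 0)) else 0)} with hE
  have hentry : ∀ (ω : Ωs) (p : Fin m × Fin n), Z ω p.1 p.2 =
      (if p ∈ ΩS then ((if Y ω p.1 p.2 = 1 then aa p else 0)
        + (if Y ω p.1 p.2 = -1 then bb p else 0)) else 0) := fun ω p => rfl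
  have hincl : {ω | T ≤ specNorm (Z ω)} ⊆ ⋃ x ∈ Nm, ⋃ y ∈ Nn, E x y := by
    intro ω hω
    simp only [Set.mem_setOf_eq] at hω
    have hσpos : 0 < specNorm (Z ω) := lt_of_lt_of_le hTpos hω
    obtain ⟨u, v, hu2, hv2, hAvu, hAtu⟩ := exists_singular_pair (Z ω) hσpos
    obtain ⟨x, hxN, hxu⟩ := hNm2 u hu2
    obtain ⟨y, hyN, hyv⟩ := hNn2 v hv2
    have hlow := net_lower_bound (Z ω) hσpos u x v y hu2 hv2 hAvu hAtu
      (hNm1 x hxN) (hNn1 y hyN) hxu hyv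
    have hbound : t ≤ ∑ i, (x : Fin m → ℝ) i * (Z ω).mulVec y i := by
      refine le_trans ?_ hlow
      rw [htdef]
      exact mul_le_mul_of_nonneg_left hω (by norm_num)
    simp only [Set.mem_iUnion]
    refine ⟨x, hxN, y, hyN, ?_⟩
    show t ≤ ∑ p : Fin m × Fin n, x p.1 * y p.2 *
      (if p ∈ ΩS then ((if Y ω p.1 p.2 = 1 then aa p else 0)
        + (if Y ω p.1 p.2 = -1 then bb p else 0)) else 0)
    have heq : ∑ i, (x : Fin m → ℝ) i * (Z ω).mulVec y i =
        ∑ p : Fin m × Fin n, x p.1 * y p.2 *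
          (if p ∈ ΩS then ((if Y ω p.1 p.2 = 1 then aa p else 0)
            + (if Y ω p.1 p.2 = -1 then bb p else 0)) else 0) := by
      rw [bilin_eq]
      exact Finset.sum_congr rfl fun p _ => by rw [hentry ω p]
    rw [← heq]
    exact hbound
  -- side conditions for pair_chernoff
  have hq01 : ∀ p ∈ ΩS, 0 ≤ q p ∧ q p ≤ 1 :=
    fun p _ => ⟨(hf01 (Mstar p.1 p.2)).1.le, (hf01 (Mstar p.1 p.2)).2.le⟩
  have hmean : ∀ p ∈ ΩS, q p * aa p + (1 - q p) * bb p = 0 := by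
    intro p _
    have h0 := (hf01 (Mstar p.1 p.2)).1
    have h1 := (hf01 (Mstar p.1 p.2)).2
    have hne : f (Mstar p.1 p.2) ≠ 0 := h0.ne'
    have hne1 : (1:ℝ) - f (Mstar p.1 p.2) ≠ 0 := by linarith
    simp only [hqdef, haa, hbb]
    field_simp
    ring
  have hgap : ∀ p ∈ ΩS, |aa p - bb p| ≤ Lα := by
    intro p _
    have h0 := (hf01 (Mstar p.1 p.2)).1
    have h1 := (hf01 (Mstar p.1 p.2)).2
    have hne : f (Mstar p.1 p.2) ≠ 0 := h0.ne'
    have hne1 : (1:ℝ) - f (Mstar p.1 p.2) ≠ 0 := by linarith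
    have hdenpos : 0 < f (Mstar p.1 p.2) * (1 - f (Mstar p.1 p.2)) := by nlinarith
    have hkey : aa p - bb p =
        -(deriv f (Mstar p.1 p.2) / (f (Mstar p.1 p.2) * (1 - f (Mstar p.1 p.2)))) := by
      simp only [haa, hbb]
      field_simp
      ring
    rw [hkey, abs_neg, abs_div, abs_of_pos hdenpos]
    exact hLα (Mstar p.1 p.2) (hMα p.1 p.2)
  have hpair : ∀ x ∈ Nm, ∀ y ∈ Nn, P (E x y) ≤
      ENNReal.ofReal (Real.exp (-(2 * t ^ 2 / Lα ^ 2))) := by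
    intro x hx y hy
    exact pair_chernoff P Y hYpm hYmeas hInd ΩS q aa bb hq hq01 hmean Lα hLpos hgap
      x y (hNm1 x hx) (hNn1 y hy) t htpos
  -- numeric constants
  set c₀ : ℝ := 21372129/3125000 with hc₀
  have hexp_eq : -(2 * t ^ 2 / Lα ^ 2) = -(c₀ * m) := by
    have ht2 : t ^ 2 = (23/25 * 2.01) ^ 2 * Lα ^ 2 * (Real.sqrt m) ^ 2 := by
      rw [htdef, hT]; ring
    rw [Real.sq_sqrt (Nat.cast_nonneg m)] at ht2
    rw [ht2, hc₀]
    have hL2 : Lα ^ 2 ≠ 0 := by positivity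
    field_simp
    ring
  have hreal : (11:ℝ) ^ m * 11 ^ n * Real.exp (-(c₀ * m)) ≤
      1 * Real.exp (-(1/100) * m) := by
    have h11n : (11:ℝ) ^ n ≤ 11 ^ m := pow_le_pow_right₀ (by norm_num) hnm
    have h121 : (11:ℝ) ^ m * 11 ^ n ≤ 121 ^ m := by
      calc (11:ℝ) ^ m * 11 ^ n ≤ 11 ^ m * 11 ^ m :=
            mul_le_mul_of_nonneg_left h11n (by positivity)
        _ = 121 ^ m := by rw [← mul_pow]; norm_num
    have hbase : (121:ℝ) * Real.exp (-c₀) ≤ Real.exp (-(1/100)) := by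
      have h5 : (121:ℝ) ≤ Real.exp (c₀ - 1/100) := by
        have e1 : (2.7:ℝ) ^ (5:ℕ) ≤ Real.exp 1 ^ (5:ℕ) := by
          apply pow_le_pow_left₀ (by norm_num)
          linarith [Real.exp_one_gt_d9]
        have e2 : Real.exp 1 ^ (5:ℕ) = Real.exp 5 := by
          rw [← Real.exp_nat_mul]; norm_num
        have e3 : Real.exp 5 ≤ Real.exp (c₀ - 1/100) := by
          apply Real.exp_le_exp.mpr
          rw [hc₀]; norm_num
        calc (121:ℝ) ≤ 2.7 ^ (5:ℕ) := by norm_num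
          _ ≤ Real.exp 1 ^ (5:ℕ) := e1
          _ = Real.exp 5 := e2
          _ ≤ Real.exp (c₀ - 1/100) := e3
      calc (121:ℝ) * Real.exp (-c₀)
          ≤ Real.exp (c₀ - 1/100) * Real.exp (-c₀) :=
            mul_le_mul_of_nonneg_right h5 (Real.exp_nonneg _)
        _ = Real.exp (-(1/100)) := by rw [← Real.exp_add]; ring_nf
    have hA : Real.exp (-(c₀ * (m:ℝ))) = (Real.exp (-c₀)) ^ m := by
      rw [show -(c₀ * (m:ℝ)) = (m:ℝ) * (-c₀) by ring, Real.exp_nat_mul]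
    have hB : Real.exp (-(1/100) * (m:ℝ)) = (Real.exp (-(1/100))) ^ m := by
      rw [show -(1/100) * (m:ℝ) = (m:ℝ) * (-(1/100)) by ring, Real.exp_nat_mul]
    calc (11:ℝ) ^ m * 11 ^ n * Real.exp (-(c₀ * m))
        ≤ 121 ^ m * Real.exp (-(c₀ * m)) :=
          mul_le_mul_of_nonneg_right h121 (Real.exp_nonneg _)
      _ = (121 * Real.exp (-c₀)) ^ m := by rw [hA, mul_pow]
      _ ≤ (Real.exp (-(1/100))) ^ m := pow_le_pow_left₀ (by positivity) hbase m
      _ = 1 * Real.exp (-(1/100) * m) := by rw [hB, one_mul]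
  -- assemble
  calc P {ω | T ≤ specNorm (Z ω)}
      ≤ P (⋃ x ∈ Nm, ⋃ y ∈ Nn, E x y) := measure_mono hincl
    _ ≤ ∑ x ∈ Nm, P (⋃ y ∈ Nn, E x y) := measure_biUnion_finset_le _ _
    _ ≤ ∑ x ∈ Nm, ∑ y ∈ Nn, P (E x y) :=
        Finset.sum_le_sum fun x _ => measure_biUnion_finset_le _ _
    _ ≤ ∑ _x ∈ Nm, ∑ _y ∈ Nn, ENNReal.ofReal (Real.exp (-(2 * t ^ 2 / Lα ^ 2))) :=
        Finset.sum_le_sum fun x hx => Finset.sum_le_sum fun y hy => hpair x hx y hy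
    _ = (Nm.card : ENNReal) * ((Nn.card : ENNReal) *
          ENNReal.ofReal (Real.exp (-(2 * t ^ 2 / Lα ^ 2)))) := by
        rw [Finset.sum_const, Finset.sum_const, nsmul_eq_mul, nsmul_eq_mul]
    _ ≤ ((11 ^ m : ℕ) : ENNReal) * (((11 ^ n : ℕ) : ENNReal) *
          ENNReal.ofReal (Real.exp (-(2 * t ^ 2 / Lα ^ 2)))) := by
        apply mul_le_mul' (Nat.cast_le.mpr hNmcard)
        apply mul_le_mul' (Nat.cast_le.mpr hNncard) le_rfl
    _ = ENNReal.ofReal ((11:ℝ) ^ m * 11 ^ n * Real.exp (-(c₀ * m))) := by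
        rw [hexp_eq, ← ENNReal.ofReal_natCast (11 ^ n), ← ENNReal.ofReal_natCast (11 ^ m),
          ← ENNReal.ofReal_mul (by positivity), ← ENNReal.ofReal_mul (by positivity)]
        push_cast
        rw [mul_assoc]
    _ ≤ ENNReal.ofReal (1 * Real.exp (-(1/100) * m)) := ENNReal.ofReal_le_ofReal hreal
end
end
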